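/- arXiv:2305.16910 — 9 statements merged into one kernel-verified Lean document; each statement's English description precedes it below -/
import Mathlib

section
/- If a sequence of functions f_k : ℂ → ℂ, each of which is either holomorphic or antiholomorphic, converges locally uniformly to a function f : ℂ → ℂ, then f is holomorphic or antiholomorphic. -/
open Filter

lemma aux_diff_of_infinite (f : ℕ → ℂ → ℂ) (g : ℂ → ℂ)
    (S : Set ℕ) (hS : S.Infinite) (hd : ∀ k ∈ S, Differentiable ℂ (f k))
    (hconv : ∀ K : Set ℂ, IsCompact K → TendstoUniformlyOn f g Filter.atTop K) :
    Differentiable ℂ g := by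
  have hne : (atTop ⊓ 𝓟 S).NeBot := by
    have h1 : ∃ᶠ n in atTop, n ∈ S := Nat.frequently_atTop_iff_infinite.2 hS
    simpa using frequently_iff_neBot.1 h1
  have hloc : TendstoLocallyUniformlyOn f g (atTop ⊓ 𝓟 S) (Set.univ : Set ℂ) := by
    rw [tendstoLocallyUniformlyOn_iff_forall_isCompact isOpen_univ]
    intro K _ hK
    intro u hu
    exact ((hconv K hK) u hu).filter_mono inf_le_left
  have := hloc.differentiableOn
    (eventually_inf_principal.2 (Eventually.of_forall fun k hk => (hd k hk).differentiableOn))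
    isOpen_univ
  rw [← differentiableOn_univ]
  exact this

/-- A locally uniform limit of functions ℂ → ℂ, each holomorphic or
antiholomorphic, is holomorphic or antiholomorphic. -/
theorem holomorphic_or_antiholomorphic_of_tendstoLocallyUniformly
    (f : ℕ → ℂ → ℂ) (g : ℂ → ℂ)
    (hf : ∀ k, Differentiable ℂ (f k) ∨
      Differentiable ℂ (fun z => starRingEnd ℂ (f k z)))
    (hconv : ∀ K : Set ℂ, IsCompact K → TendstoUniformlyOn f g Filter.atTop K) :
    Differentiable ℂ g ∨ Differentiable ℂ (fun z => starRingEnd ℂ (g z)) := by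
  by_cases h : {k | Differentiable ℂ (f k)}.Infinite
  · exact Or.inl (aux_diff_of_infinite f g _ h (fun k hk => hk) hconv)
  · right
    rw [Set.not_infinite] at h
    have hT : {k | Differentiable ℂ (fun z => starRingEnd ℂ (f k z))}.Infinite := by
      refine h.infinite_compl.mono ?_
      intro k hk
      exact (hf k).resolve_left hk
    have hconv' : ∀ K : Set ℂ, IsCompact K →
        TendstoUniformlyOn (fun k z => starRingEnd ℂ (f k z))
          (fun z => starRingEnd ℂ (g z)) Filter.atTop K := by
      intro K hK
      exact Complex.conjLIE.isometry.uniformContinuous.comp_tendstoUniformlyOn (hconv K hK)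
    exact aux_diff_of_infinite _ _ _ hT (fun k hk => hk) hconv'
end

section
/- Let ρ : ℂ → ℂ be continuous, real differentiable at some z₀ ∈ ℂ with ∂_w ρ(z₀) ≠ 0 and ∂̄_w ρ(z₀) = 0. Then for every compact set K ⊆ ℂ and every ε > 0 there exist affine maps φ, ψ : ℂ → ℂ (i.e., of the form z ↦ az + b with a, b ∈ ℂ) such that sup_{z ∈ K} |ψ(ρ(φ(z))) − z| < ε. -/
/-- Wirtinger derivative ∂_w f = (1/2)(∂f/∂x − i ∂f/∂y). -/
noncomputable def wirt (f : ℂ → ℂ) (z : ℂ) : ℂ :=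
  (1/2) * (fderiv ℝ f z 1 - Complex.I * fderiv ℝ f z Complex.I)

/-- Conjugate Wirtinger derivative ∂̄_w f = (1/2)(∂f/∂x + i ∂f/∂y). -/
noncomputable def awirt (f : ℂ → ℂ) (z : ℂ) : ℂ :=
  (1/2) * (fderiv ℝ f z 1 + Complex.I * fderiv ℝ f z Complex.I)

/-- if ∂_w ρ(z₀) ≠ 0 and ∂̄_w ρ(z₀) = 0, then the identity can be uniformly
approximated on compact sets by ψ ∘ ρ ∘ φ with ℂ-affine φ, ψ. -/
theorem approx_identity_of_wirt_ne_zero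
    (ρ : ℂ → ℂ) (hρc : Continuous ρ) (z₀ : ℂ) (hρd : DifferentiableAt ℝ ρ z₀)
    (h1 : wirt ρ z₀ ≠ 0) (h2 : awirt ρ z₀ = 0)
    (K : Set ℂ) (hK : IsCompact K) (ε : ℝ) (hε : 0 < ε) :
    ∃ a b c d : ℂ, ∀ z ∈ K, ‖c * ρ (a * z + b) + d - z‖ < ε := by
  set L := fderiv ℝ ρ z₀ with hLdef
  set A := wirt ρ z₀ with hAdef
  have h2' : L 1 + Complex.I * L Complex.I = 0 := by
    have := h2
    unfold awirt at this
    rw [← hLdef] at this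
    field_simp at this
    linear_combination this
  have hLI : L Complex.I = Complex.I * L 1 := by
    linear_combination (-Complex.I) * h2' + (L Complex.I) * Complex.I_mul_I
  have hA1 : A = L 1 := by
    rw [hAdef]; unfold wirt; rw [← hLdef, hLI]
    linear_combination (-(1/2) * L 1) * Complex.I_mul_I
  have hLh : ∀ h : ℂ, L h = h * A := by
    intro h
    have hd : L h = h.re • L 1 + h.im • L Complex.I := by
      rw [← map_smul, ← map_smul, ← map_add]
      congr 1
      simp [Complex.real_smul]
    rw [hd, hLI, ← hA1]
    simp only [Complex.real_smul]
    linear_combination A * (Complex.re_add_im h)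
  have hA0 : A ≠ 0 := h1
  -- bound on K
  obtain ⟨R, hR⟩ := hK.isBounded.subset_closedBall 0
  set M : ℝ := |R| + 1 with hMdef
  have hM : 0 < M := by positivity
  have habs : ‖A‖ > 0 := by
    exact norm_pos_iff.mpr hA0
  set η : ℝ := ε * ‖A‖ / (2 * M) with hηdef
  have hη : 0 < η := by positivity
  -- little-o estimate
  have hfd : HasFDerivAt ρ L z₀ := hρd.hasFDerivAt
  have hlo := (hasFDerivAt_iff_isLittleO_nhds_zero.mp hfd).def hη
  rw [Metric.eventually_nhds_iff] at hlo
  obtain ⟨δ₀, hδ₀, hball⟩ := hlo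
  set δ : ℝ := δ₀ / (2 * M) with hδdef
  have hδ : 0 < δ := by positivity
  refine ⟨(δ : ℂ), z₀, ((A * δ)⁻¹ : ℂ), -ρ z₀ * (A * δ)⁻¹, ?_⟩
  intro z hz
  have hzR : ‖z‖ ≤ |R| := by
    have := hR hz
    simp [Metric.mem_closedBall, Complex.dist_eq] at this
    exact le_trans this (le_abs_self R)
  have hzM : ‖z‖ ≤ M := le_trans hzR (by rw [hMdef]; linarith)
  have hδz : dist ((δ : ℂ) * z) 0 < δ₀ := by
    simp only [dist_zero_right, norm_mul, Complex.norm_real,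
      Real.norm_eq_abs, abs_of_pos hδ]
    calc δ * ‖z‖ ≤ δ * M := by
          exact mul_le_mul_of_nonneg_left hzM hδ.le
      _ = δ₀ / 2 := by rw [hδdef]; field_simp
      _ < δ₀ := by linarith
  have hbound := hball hδz
  rw [hLh] at hbound
  -- rewrite the expression
  have hAδ : (A * (δ : ℂ)) ≠ 0 := by
    apply mul_ne_zero hA0
    simp [Complex.ofReal_ne_zero]
    exact ne_of_gt hδ
  have key : ((A * (δ : ℂ))⁻¹ : ℂ) * ρ ((δ : ℂ) * z + z₀) + -ρ z₀ * (A * (δ : ℂ))⁻¹ - z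
      = (ρ (z₀ + (δ : ℂ) * z) - ρ z₀ - ((δ : ℂ) * z) * A) * (A * (δ : ℂ))⁻¹ := by
    have hδc : (δ : ℂ) ≠ 0 := by exact_mod_cast hδ.ne'
    field_simp
    ring_nf
  rw [key]
  rw [norm_mul]
  have hnorm : ‖ρ (z₀ + (δ : ℂ) * z) - ρ z₀ - ((δ : ℂ) * z) * A‖
      ≤ η * ‖(δ : ℂ) * z‖ := by
    simpa using hbound
  have habsδz : ‖(δ : ℂ) * z‖ ≤ δ * M := by
    simp only [norm_mul, Complex.norm_real, Real.norm_eq_abs, abs_of_pos hδ]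
    exact mul_le_mul_of_nonneg_left hzM hδ.le
  have hinv : ‖(A * (δ : ℂ))⁻¹‖ = (‖A‖ * δ)⁻¹ := by
    simp [norm_inv, norm_mul, abs_of_pos hδ]
  rw [hinv]
  have hpos : 0 < ‖A‖ * δ := by positivity
  calc ‖ρ (z₀ + (δ : ℂ) * z) - ρ z₀ - ((δ : ℂ) * z) * A‖ * (‖A‖ * δ)⁻¹
      ≤ (η * (δ * M)) * (‖A‖ * δ)⁻¹ := by
        apply mul_le_mul_of_nonneg_right _ (by positivity)
        exact le_trans hnorm (mul_le_mul_of_nonneg_left habsδz hη.le)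
    _ = ε / 2 := by
        rw [hηdef]
        field_simp
    _ < ε := by linarith
end

section
/- Let ρ : ℂ → ℂ be continuous, real differentiable at some z₀ ∈ ℂ with ∂_w ρ(z₀) = 0 and ∂̄_w ρ(z₀) ≠ 0. Then for every compact set K ⊆ ℂ and every ε > 0 there exist ℂ-affine maps φ, ψ : ℂ → ℂ such that sup_{z ∈ K} |ψ(ρ(φ(z))) − conj(z)| < ε. -/
/-- if ∂_w ρ(z₀) = 0 and ∂̄_w ρ(z₀) ≠ 0, then complex conjugation can be
uniformly approximated on compact sets by ψ ∘ ρ ∘ φ with ℂ-affine φ, ψ. -/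
theorem approx_conj_of_awirt_ne_zero
    (ρ : ℂ → ℂ) (hρc : Continuous ρ) (z₀ : ℂ) (hρd : DifferentiableAt ℝ ρ z₀)
    (h1 : wirt ρ z₀ = 0) (h2 : awirt ρ z₀ ≠ 0)
    (K : Set ℂ) (hK : IsCompact K) (ε : ℝ) (hε : 0 < ε) :
    ∃ a b c d : ℂ, ∀ z ∈ K,
      ‖c * ρ (a * z + b) + d - starRingEnd ℂ z‖ < ε := by
  set L := fderiv ℝ ρ z₀ with hLdef
  set A := awirt ρ z₀ with hAdef
  have hL1 : L 1 = Complex.I * L Complex.I := by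
    have h1' : (1/2 : ℂ) * (L 1 - Complex.I * L Complex.I) = 0 := h1
    linear_combination 2 * h1'
  have hAe : A = L 1 := by
    have : A = (1/2 : ℂ) * (L 1 + Complex.I * L Complex.I) := rfl
    rw [this]
    linear_combination (-(1/2) : ℂ) * hL1
  have key : ∀ h : ℂ, L h = A * (starRingEnd ℂ) h := by
    intro h
    have hsplit : h = h.re • (1:ℂ) + h.im • Complex.I := by
      simp [Complex.real_smul, Complex.re_add_im]
    have e0 : L h = (h.re:ℂ) * L 1 + (h.im:ℂ) * L Complex.I := by
      conv_lhs => rw [hsplit]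
      rw [map_add, map_smul, map_smul]
      simp [Complex.real_smul]
    have econj : (starRingEnd ℂ) h = (h.re:ℂ) - (h.im:ℂ) * Complex.I := by
      apply Complex.ext <;> simp
    rw [e0, econj, hAe, hL1]
    linear_combination ((h.im:ℂ) * L Complex.I) * Complex.I_sq
  -- bound for K
  obtain ⟨R, hR⟩ := hK.isBounded.subset_closedBall 0
  set M : ℝ := max R 1 with hMdef
  have hM1 : (1:ℝ) ≤ M := le_max_right _ _
  have hMpos : (0:ℝ) < M := lt_of_lt_of_le one_pos hM1
  have hKM : ∀ z ∈ K, ‖z‖ ≤ M := by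
    intro z hz
    have := hR hz
    simp [Metric.mem_closedBall, Complex.dist_eq] at this
    exact le_trans this (le_max_left _ _)
  have hAabs : 0 < ‖A‖ := by
    simpa [norm_pos_iff] using h2
  set η : ℝ := ε * ‖A‖ / (2 * M) with hηdef
  have hηpos : 0 < η := by positivity
  -- little-o
  have hlo := (hρd.hasFDerivAt).isLittleO
  have hev := Asymptotics.isLittleO_iff.mp hlo hηpos
  rw [Metric.eventually_nhds_iff] at hev
  obtain ⟨δ, hδpos, hδ⟩ := hev
  set ar : ℝ := δ / (2 * M) with hardef
  have harpos : 0 < ar := by positivity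
  set a : ℂ := (ar : ℂ) with hadef
  have haabs : ‖a‖ = ar := by
    simp [hadef, abs_of_pos harpos]
  have hAa : A * (starRingEnd ℂ) a ≠ 0 := by
    apply mul_ne_zero h2
    simp [hadef]
    exact ne_of_gt harpos
  refine ⟨a, z₀, (A * (starRingEnd ℂ) a)⁻¹, -(ρ z₀) * (A * (starRingEnd ℂ) a)⁻¹, ?_⟩
  intro z hz
  have hzM := hKM z hz
  have hsmall : dist (a * z + z₀) z₀ < δ := by
    rw [Complex.dist_eq]
    simp only [add_sub_cancel_right]
    rw [norm_mul, haabs]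
    calc ar * ‖z‖ ≤ ar * M := by
          exact mul_le_mul_of_nonneg_left hzM (le_of_lt harpos)
      _ = δ / 2 := by
          field_simp [hardef]
          rw [hardef]; field_simp
      _ < δ := by linarith
  have hb := hδ hsmall
  simp only [add_sub_cancel_right] at hb
  -- hb : ‖ρ (a*z+z₀) - ρ z₀ - L (a*z)‖ ≤ η * ‖a*z‖
  have hLaz : L (a * z) = A * (starRingEnd ℂ) a * (starRingEnd ℂ) z := by
    rw [key (a * z), map_mul]; ring
  have heq : (A * (starRingEnd ℂ) a)⁻¹ * ρ (a * z + z₀) + (-(ρ z₀) * (A * (starRingEnd ℂ) a)⁻¹)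
      - (starRingEnd ℂ) z
      = (A * (starRingEnd ℂ) a)⁻¹ * (ρ (a * z + z₀) - ρ z₀ - L (a * z)) := by
    rw [hLaz]
    field_simp [right_ne_zero_of_mul hAa]
    ring
  rw [heq, norm_mul]
  have habsinv : ‖(A * (starRingEnd ℂ) a)⁻¹‖ = (‖A‖ * ar)⁻¹ := by
    rw [norm_inv, norm_mul, Complex.norm_conj, haabs]
  rw [habsinv]
  have hnorm : ‖ρ (a * z + z₀) - ρ z₀ - L (a * z)‖ ≤ η * (ar * M) := by
    refine le_trans hb ?_
    rw [norm_mul, haabs]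
    exact mul_le_mul_of_nonneg_left (mul_le_mul_of_nonneg_left hzM (le_of_lt harpos)) (le_of_lt hηpos)
  calc (‖A‖ * ar)⁻¹ * ‖ρ (a * z + z₀) - ρ z₀ - L (a * z)‖
      ≤ (‖A‖ * ar)⁻¹ * (η * (ar * M)) := by
        exact mul_le_mul_of_nonneg_left hnorm (by positivity)
    _ = ε / 2 := by
        rw [hηdef]
        field_simp
    _ < ε := by linarith
end

section
/- Let ρ : ℂ → ℂ be continuous, real differentiable at z₀ ∈ ℂ with ∂_w ρ(z₀) ≠ 0 and ∂̄_w ρ(z₀) ≠ 0. Then for every compact K ⊆ ℂ and ε > 0 there exist a ℂ-affine map φ : ℂ → ℂ² and a ℂ-affine map ψ : ℂ² → ℂ² such that sup_{z ∈ K} ‖ψ(ρ(φ(z)₁), ρ(φ(z)₂)) − (z, conj(z))‖ < ε, where ‖·‖ is the Euclidean norm on ℂ². -/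
lemma fderiv_rep (f : ℂ →L[ℝ] ℂ) (w : ℂ) :
    f w = ((1/2) * (f 1 - Complex.I * f Complex.I)) * w
        + ((1/2) * (f 1 + Complex.I * f Complex.I)) * (starRingEnd ℂ w) := by
  have hw' : w = (w.re : ℂ) + (w.im : ℂ) * Complex.I := (Complex.re_add_im w).symm
  have h1 : f w = (w.re : ℂ) * f 1 + (w.im : ℂ) * f Complex.I := by
    calc f w = f (w.re • (1:ℂ) + w.im • Complex.I) := by
          congr 1
          simp [Complex.real_smul, ← hw']
    _ = w.re • f 1 + w.im • f Complex.I := by rw [map_add, map_smul, map_smul]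
    _ = (w.re:ℂ) * f 1 + (w.im:ℂ) * f Complex.I := by simp [Complex.real_smul]
  have h2 : (starRingEnd ℂ) w = (w.re:ℂ) - (w.im:ℂ) * Complex.I := by
    simp [Complex.ext_iff]
  rw [h1, h2]
  linear_combination (-(1/2) * (f 1 - Complex.I * f Complex.I)) * hw'
    + (w.im:ℂ) * f Complex.I * Complex.I_sq


/-- if both Wirtinger derivatives of ρ are nonzero at z₀, then
z ↦ (z, conj z) can be uniformly approximated on compact sets (in the Euclidean norm
on ℂ²) by ψ ∘ ρ^{×2} ∘ φ with ℂ-affine φ : ℂ → ℂ² and ψ : ℂ² → ℂ². -/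
theorem approx_id_and_conj_of_both_wirt_ne_zero
    (ρ : ℂ → ℂ) (hρc : Continuous ρ) (z₀ : ℂ) (hρd : DifferentiableAt ℝ ρ z₀)
    (h1 : wirt ρ z₀ ≠ 0) (h2 : awirt ρ z₀ ≠ 0)
    (K : Set ℂ) (hK : IsCompact K) (ε : ℝ) (hε : 0 < ε) :
    ∃ (A : ℂ →ₗ[ℂ] ℂ × ℂ) (b : ℂ × ℂ) (B : ℂ × ℂ →ₗ[ℂ] ℂ × ℂ) (c : ℂ × ℂ),
      ∀ z ∈ K,
        Real.sqrt
          ((‖(B (ρ (A z + b).1, ρ (A z + b).2) + c).1 - z‖)^2 +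
           (‖(B (ρ (A z + b).1, ρ (A z + b).2) + c).2
              - starRingEnd ℂ z‖)^2) < ε := by
  obtain ⟨r, hr⟩ := hK.isBounded.subset_closedBall 0
  set R : ℝ := max r 1 with hRdef
  have hR1 : (1:ℝ) ≤ R := le_max_right r 1
  have hR0 : (0:ℝ) < R := lt_of_lt_of_le one_pos hR1
  have hzR : ∀ z ∈ K, ‖z‖ ≤ R := by
    intro z hz
    have := hr hz
    rw [Metric.mem_closedBall, Complex.dist_eq, sub_zero] at this
    exact this.trans (le_max_left r 1)
  set a : ℂ := wirt ρ z₀ with hadef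
  set b' : ℂ := awirt ρ z₀ with hbdef
  have ha : 0 < ‖a‖ := by simpa using h1
  have hb : 0 < ‖b'‖ := by simpa using h2
  set M : ℝ := 1 / ‖a‖ + 1 / ‖b'‖ with hMdef
  have hM : 0 < M := by positivity
  set η : ℝ := ε / (R * M + 1) with hηdef
  have hη : 0 < η := by positivity
  have hf : HasFDerivAt ρ (fderiv ℝ ρ z₀) z₀ := hρd.hasFDerivAt
  rw [hasFDerivAt_iff_isLittleO_nhds_zero] at hf
  have hev := hf.def hη
  rw [Metric.eventually_nhds_iff] at hev
  obtain ⟨δ₀, hδ₀, hsmall⟩ := hev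
  set δ : ℝ := δ₀ / (2 * (R + 1)) with hδdef
  have hδ : 0 < δ := by positivity
  have hδc : (δ:ℂ) ≠ 0 := by exact_mod_cast hδ.ne'
  have hRδ : R * δ < δ₀ := by
    rw [hδdef, mul_comm R, div_mul_eq_mul_div, div_lt_iff₀ (by linarith : (0:ℝ) < 2 * (R + 1))]
    nlinarith
  set p : ℂ := 1 / (2 * a * δ) with hpdef
  set q : ℂ := 1 / (2 * b' * δ) with hqdef
  refine ⟨(LinearMap.toSpanSingleton ℂ ℂ ((δ:ℂ))).prod
      (LinearMap.toSpanSingleton ℂ ℂ ((δ:ℂ) * Complex.I)),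
    (z₀, z₀),
    (p • LinearMap.fst ℂ ℂ ℂ + (-(Complex.I) * p) • LinearMap.snd ℂ ℂ ℂ).prod
      (q • LinearMap.fst ℂ ℂ ℂ + (Complex.I * q) • LinearMap.snd ℂ ℂ ℂ),
    (-(ρ z₀) * (1 - Complex.I) * p, -(ρ z₀) * (1 + Complex.I) * q), ?_⟩
  intro z hz
  simp only [LinearMap.prod_apply, Function.prod, LinearMap.toSpanSingleton_apply,
    LinearMap.add_apply, LinearMap.smul_apply, LinearMap.fst_apply, LinearMap.snd_apply,
    smul_eq_mul, Prod.mk_add_mk, Prod.fst, Prod.snd]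
  set w₁ : ℂ := z * ((δ:ℂ)) with hw1
  set w₂ : ℂ := z * ((δ:ℂ) * Complex.I) with hw2
  have habs1 : ‖w₁‖ = ‖z‖ * δ := by
    rw [hw1, norm_mul, Complex.norm_real, Real.norm_eq_abs, abs_of_pos hδ]
  have habs2 : ‖w₂‖ = ‖z‖ * δ := by
    rw [hw2, norm_mul, norm_mul, Complex.norm_real, Real.norm_eq_abs, Complex.norm_I, abs_of_pos hδ, mul_one]
  have hzRz : ‖z‖ ≤ R := hzR z hz
  have hlt : ‖z‖ * δ < δ₀ := by nlinarith [norm_nonneg z]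
  set e₁ : ℂ := ρ (z₀ + w₁) - ρ z₀ - fderiv ℝ ρ z₀ w₁ with he1def
  set e₂ : ℂ := ρ (z₀ + w₂) - ρ z₀ - fderiv ℝ ρ z₀ w₂ with he2def
  have he1 : ‖e₁‖ ≤ η * (R * δ) := by
    have := hsmall (y := w₁) (by rw [dist_zero_right, habs1]; exact hlt)
    rw [habs1] at this
    exact this.trans (mul_le_mul_of_nonneg_left
      (mul_le_mul_of_nonneg_right hzRz hδ.le) hη.le)
  have he2 : ‖e₂‖ ≤ η * (R * δ) := by
    have := hsmall (y := w₂) (by rw [dist_zero_right, habs2]; exact hlt)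
    rw [habs2] at this
    exact this.trans (mul_le_mul_of_nonneg_left
      (mul_le_mul_of_nonneg_right hzRz hδ.le) hη.le)
  have hrep1 : ρ (w₁ + z₀) = ρ z₀ + (a * w₁ + b' * (starRingEnd ℂ w₁)) + e₁ := by
    rw [add_comm w₁ z₀, he1def]
    have := fderiv_rep (fderiv ℝ ρ z₀) w₁
    rw [hadef, hbdef, wirt, awirt]
    rw [this]
    ring
  have hrep2 : ρ (w₂ + z₀) = ρ z₀ + (a * w₂ + b' * (starRingEnd ℂ w₂)) + e₂ := by
    rw [add_comm w₂ z₀, he2def]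
    have := fderiv_rep (fderiv ℝ ρ z₀) w₂
    rw [hadef, hbdef, wirt, awirt]
    rw [this]
    ring
  have hconj1 : (starRingEnd ℂ) w₁ = (starRingEnd ℂ z) * (δ:ℂ) := by
    rw [hw1, map_mul, Complex.conj_ofReal]
  have hconj2 : (starRingEnd ℂ) w₂ = -((starRingEnd ℂ z) * ((δ:ℂ) * Complex.I)) := by
    rw [hw2, map_mul, map_mul, Complex.conj_ofReal, Complex.conj_I]
    ring
  have hp : p * (2 * a * (δ:ℂ)) = 1 := by
    rw [hpdef]; field_simp
  have hq : q * (2 * b' * (δ:ℂ)) = 1 := by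
    rw [hqdef]; field_simp
  have hval1 :
      p * ρ (w₁ + z₀) + -Complex.I * p * ρ (w₂ + z₀) + -(ρ z₀) * (1 - Complex.I) * p - z
        = (e₁ - Complex.I * e₂) * p := by
    rw [hrep1, hrep2, hconj1, hconj2, hw1, hw2]
    linear_combination z * hp
      + (p * b' * (δ:ℂ) * (starRingEnd ℂ) z - p * a * (δ:ℂ) * z) * Complex.I_sq
  have hval2 :
      q * ρ (w₁ + z₀) + Complex.I * q * ρ (w₂ + z₀) + -(ρ z₀) * (1 + Complex.I) * q
        - (starRingEnd ℂ) z = (e₁ + Complex.I * e₂) * q := by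
    rw [hrep1, hrep2, hconj1, hconj2, hw1, hw2]
    linear_combination (starRingEnd ℂ) z * hq
      + (q * a * (δ:ℂ) * z - q * b' * (δ:ℂ) * (starRingEnd ℂ) z) * Complex.I_sq
  have habsp : ‖p‖ = 1 / (2 * ‖a‖ * δ) := by
    rw [hpdef, norm_div, norm_one, norm_mul, norm_mul, Complex.norm_two, Complex.norm_real, Real.norm_eq_abs,
      abs_of_pos hδ]
  have habsq : ‖q‖ = 1 / (2 * ‖b'‖ * δ) := by
    rw [hqdef, norm_div, norm_one, norm_mul, norm_mul, Complex.norm_two, Complex.norm_real, Real.norm_eq_abs,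
      abs_of_pos hδ]
  have hE1 : ‖(e₁ - Complex.I * e₂) * p‖ ≤ η * R * (1 / ‖a‖) := by
    rw [norm_mul, habsp]
    have hsum : ‖e₁ - Complex.I * e₂‖ ≤ ‖e₁‖ + ‖e₂‖ := by
      refine (norm_sub_le e₁ (Complex.I * e₂)).trans ?_
      rw [norm_mul, Complex.norm_I, one_mul]
    have h2sum : ‖e₁ - Complex.I * e₂‖ ≤ 2 * (η * (R * δ)) := by linarith
    rw [mul_one_div, mul_one_div, div_le_div_iff₀ (by positivity) ha]
    calc ‖e₁ - Complex.I * e₂‖ * ‖a‖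
        ≤ (2 * (η * (R * δ))) * ‖a‖ := by
          exact mul_le_mul_of_nonneg_right h2sum (norm_nonneg a)
      _ = η * R * (2 * ‖a‖ * δ) := by ring
  have hE2 : ‖(e₁ + Complex.I * e₂) * q‖ ≤ η * R * (1 / ‖b'‖) := by
    rw [norm_mul, habsq]
    have hsum : ‖e₁ + Complex.I * e₂‖ ≤ ‖e₁‖ + ‖e₂‖ := by
      refine (norm_add_le e₁ (Complex.I * e₂)).trans ?_
      rw [norm_mul, Complex.norm_I, one_mul]
    have h2sum : ‖e₁ + Complex.I * e₂‖ ≤ 2 * (η * (R * δ)) := by linarith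
    rw [mul_one_div, mul_one_div, div_le_div_iff₀ (by positivity) hb]
    calc ‖e₁ + Complex.I * e₂‖ * ‖b'‖
        ≤ (2 * (η * (R * δ))) * ‖b'‖ := by
          exact mul_le_mul_of_nonneg_right h2sum (norm_nonneg b')
      _ = η * R * (2 * ‖b'‖ * δ) := by ring
  rw [hval1, hval2]
  set E₁ : ℝ := ‖(e₁ - Complex.I * e₂) * p‖ with hE1def
  set E₂ : ℝ := ‖(e₁ + Complex.I * e₂) * q‖ with hE2def
  have hEnn1 : 0 ≤ E₁ := norm_nonneg _
  have hEnn2 : 0 ≤ E₂ := norm_nonneg _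
  have hsqrt : Real.sqrt (E₁^2 + E₂^2) ≤ E₁ + E₂ := by
    rw [show E₁ + E₂ = Real.sqrt ((E₁ + E₂)^2) from (Real.sqrt_sq (by positivity)).symm]
    apply Real.sqrt_le_sqrt
    nlinarith
  have hfinal : E₁ + E₂ ≤ η * R * M := by
    rw [hMdef]; rw [mul_add]; exact add_le_add hE1 hE2
  have hlast : η * R * M < ε := by
    have hpos : (0:ℝ) < R * M + 1 := by positivity
    rw [hηdef, div_mul_eq_mul_div, div_mul_eq_mul_div, div_lt_iff₀ hpos]
    calc ε * R * M = ε * (R * M) := by ring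
      _ < ε * (R * M + 1) := mul_lt_mul_of_pos_left (lt_add_one (R * M)) hε
  calc Real.sqrt (E₁^2 + E₂^2) ≤ E₁ + E₂ := hsqrt
    _ ≤ η * R * M := hfinal
    _ < ε := hlast
end

section
/- Let ρ : ℂ → ℂ be twice continuously real-differentiable and z₀ ∈ ℂ with ∂_w ∂̄_w ρ(z₀) ≠ 0. Then the functions f_h(z) = [ρ(z₀+hz) + ρ(z₀−hz) + ρ(z₀+ihz) + ρ(z₀−ihz) − 4ρ(z₀)] / (4h²·∂_w ∂̄_w ρ(z₀)) converge to z ↦ z·conj(z) = |z|² uniformly on every compact subset of ℂ as h → 0⁺. -/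
open Complex Filter Set

lemma awirt_fderiv (ρ : ℂ → ℂ) (hρ : ContDiff ℝ 2 ρ) (z₀ u : ℂ) :
    fderiv ℝ (awirt ρ) z₀ u
      = (1/2) * (fderiv ℝ (fderiv ℝ ρ) z₀ u 1
          + Complex.I * fderiv ℝ (fderiv ℝ ρ) z₀ u Complex.I) := by
  set B := fderiv ℝ (fderiv ℝ ρ) z₀ with hB
  have hF : HasFDerivAt (fderiv ℝ ρ) B z₀ := by
    have h1 : ContDiff ℝ 1 (fderiv ℝ ρ) := hρ.fderiv_right (by norm_num)
    exact (h1.differentiable one_ne_zero z₀).hasFDerivAt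
  have h1 : HasFDerivAt (fun z => fderiv ℝ ρ z 1)
      ((ContinuousLinearMap.apply ℝ ℂ (1:ℂ)).comp B) z₀ :=
    (ContinuousLinearMap.apply ℝ ℂ (1:ℂ)).hasFDerivAt.comp z₀ hF
  have h2 : HasFDerivAt (fun z => fderiv ℝ ρ z Complex.I)
      ((ContinuousLinearMap.apply ℝ ℂ (Complex.I)).comp B) z₀ :=
    (ContinuousLinearMap.apply ℝ ℂ (Complex.I)).hasFDerivAt.comp z₀ hF
  have h3 : HasFDerivAt (awirt ρ)
      ((1/2 : ℂ) • (((ContinuousLinearMap.apply ℝ ℂ (1:ℂ)).comp B)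
        + Complex.I • ((ContinuousLinearMap.apply ℝ ℂ (Complex.I)).comp B))) z₀ :=
    (h1.add (h2.const_mul Complex.I)).const_mul (1/2 : ℂ)
  rw [h3.fderiv]
  simp [smul_eq_mul]
  ring

lemma wirt_awirt_eq (ρ : ℂ → ℂ) (hρ : ContDiff ℝ 2 ρ) (z₀ : ℂ) :
    wirt (awirt ρ) z₀ = (1/4) * (fderiv ℝ (fderiv ℝ ρ) z₀ 1 1
      + fderiv ℝ (fderiv ℝ ρ) z₀ Complex.I Complex.I) := by
  have hsymm : fderiv ℝ (fderiv ℝ ρ) z₀ 1 Complex.I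
      = fderiv ℝ (fderiv ℝ ρ) z₀ Complex.I 1 :=
    (hρ.contDiffAt.isSymmSndFDerivAt (by norm_num)).eq 1 Complex.I
  rw [wirt, awirt_fderiv ρ hρ, awirt_fderiv ρ hρ, hsymm]
  have : (Complex.I : ℂ) * Complex.I = -1 := Complex.I_mul_I
  linear_combination (-(1/4 : ℂ) * fderiv ℝ (fderiv ℝ ρ) z₀ Complex.I Complex.I) * this

lemma bilin_sum (B : ℂ →L[ℝ] ℂ →L[ℝ] ℂ) (z : ℂ) :
    B z z + B (Complex.I * z) (Complex.I * z)
      = (z * starRingEnd ℂ z) * (B 1 1 + B Complex.I Complex.I) := by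
  obtain ⟨x, y, rfl⟩ : ∃ x y : ℝ, z = x • (1:ℂ) + y • Complex.I :=
    ⟨z.re, z.im, by simp [Complex.real_smul, Complex.re_add_im]⟩
  have hiz : Complex.I * (x • (1:ℂ) + y • Complex.I) = (-y) • (1:ℂ) + x • Complex.I := by
    simp only [Complex.real_smul, mul_one]
    push_cast
    linear_combination (y : ℂ) * Complex.I_mul_I
  rw [hiz]
  simp only [map_add, map_smul, ContinuousLinearMap.add_apply, ContinuousLinearMap.smul_apply,
    ContinuousLinearMap.map_smul, ContinuousLinearMap.map_add]
  simp only [Complex.real_smul, mul_one]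
  simp only [map_add, map_mul, Complex.conj_ofReal, Complex.conj_I]
  push_cast
  linear_combination ((y:ℂ)^2 * (B 1 1 + B Complex.I Complex.I)) * Complex.I_mul_I

lemma taylor_bound (ρ : ℂ → ℂ) (hρ : ContDiff ℝ 2 ρ) (z₀ : ℂ) {ε : ℝ} (hε : 0 < ε) :
    ∃ δ > 0, ∀ w : ℂ, ‖w‖ < δ →
      ‖ρ (z₀ + w) - ρ z₀ - fderiv ℝ ρ z₀ w
        - (1/2 : ℝ) • fderiv ℝ (fderiv ℝ ρ) z₀ w w‖ ≤ ε * ‖w‖^2 := by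
  set A := fderiv ℝ ρ z₀ with hA
  set B := fderiv ℝ (fderiv ℝ ρ) z₀ with hBdef
  have hsymm : ∀ v u : ℂ, B v u = B u v := fun v u =>
    (hρ.contDiffAt.isSymmSndFDerivAt (by norm_num)).eq v u
  have hF : HasFDerivAt (fderiv ℝ ρ) B z₀ := by
    have h1 : ContDiff ℝ 1 (fderiv ℝ ρ) := hρ.fderiv_right (by norm_num)
    exact (h1.differentiable one_ne_zero z₀).hasFDerivAt
  have hlo := hasFDerivAt_iff_isLittleO_nhds_zero.1 hF
  have hev : ∀ᶠ u in nhds (0:ℂ), ‖fderiv ℝ ρ (z₀ + u) - fderiv ℝ ρ z₀ - B u‖ ≤ ε * ‖u‖ := by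
    filter_upwards [hlo.def hε] with u hu using hu
  obtain ⟨δ, hδpos, hδ⟩ := Metric.eventually_nhds_iff.1 hev
  refine ⟨δ, hδpos, fun w hw => ?_⟩
  set g : ℂ → ℂ := fun u => ρ (z₀ + u) - ρ z₀ - A u - (1/2 : ℝ) • B u u with hg
  have hgder : ∀ u : ℂ, HasFDerivAt g (fderiv ℝ ρ (z₀ + u) - A - B u) u := by
    intro u
    have h1 : HasFDerivAt (fun u => ρ (z₀ + u)) (fderiv ℝ ρ (z₀ + u)) u := by
      have hd := (hρ.differentiable (by norm_num) (z₀ + u)).hasFDerivAt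
      have hs : HasFDerivAt (fun u : ℂ => z₀ + u) (ContinuousLinearMap.id ℝ ℂ) u :=
        (hasFDerivAt_id u).const_add z₀
      have := hd.comp u hs
      rwa [ContinuousLinearMap.comp_id] at this
    have h2 : HasFDerivAt (fun u : ℂ => A u) A u := A.hasFDerivAt
    have hp : HasFDerivAt (fun u : ℂ => (u, u))
        ((ContinuousLinearMap.id ℝ ℂ).prod (ContinuousLinearMap.id ℝ ℂ)) u :=
      (hasFDerivAt_id u).prodMk (hasFDerivAt_id u)
    have hb : HasFDerivAt (fun v : ℂ => B v v)
        ((B.isBoundedBilinearMap.deriv (u, u)).comp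
          ((ContinuousLinearMap.id ℝ ℂ).prod (ContinuousLinearMap.id ℝ ℂ))) u :=
      HasFDerivAt.comp (g := fun p : ℂ × ℂ => B p.1 p.2) (f := fun v : ℂ => (v, v)) u
        (B.isBoundedBilinearMap.hasFDerivAt (u, u)) hp
    have h3 : HasFDerivAt (fun u : ℂ => (1/2 : ℝ) • B u u)
        ((1/2 : ℝ) • ((B.isBoundedBilinearMap.deriv (u, u)).comp
          ((ContinuousLinearMap.id ℝ ℂ).prod (ContinuousLinearMap.id ℝ ℂ)))) u :=
      hb.const_smul (1/2 : ℝ)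
    have hG := ((h1.sub_const (ρ z₀)).sub h2).sub h3
    refine hG.congr_fderiv ?_
    refine ContinuousLinearMap.ext fun v => ?_
    simp only [ContinuousLinearMap.sub_apply, ContinuousLinearMap.smul_apply,
      ContinuousLinearMap.comp_apply, ContinuousLinearMap.prod_apply,
      ContinuousLinearMap.id_apply, IsBoundedBilinearMap.deriv_apply]
    rw [hsymm v u]
    push_cast [smul_eq_mul, Complex.real_smul]
    ring
  have hbound : ∀ u ∈ Metric.closedBall (0:ℂ) ‖w‖,
      ‖fderiv ℝ ρ (z₀ + u) - A - B u‖ ≤ ε * ‖w‖ := by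
    intro u hu
    rw [Metric.mem_closedBall, dist_zero_right] at hu
    calc ‖fderiv ℝ ρ (z₀ + u) - A - B u‖ ≤ ε * ‖u‖ := by
          apply hδ
          rw [dist_zero_right]; exact lt_of_le_of_lt hu hw
      _ ≤ ε * ‖w‖ := by gcongr
  have hmv := (convex_closedBall (0:ℂ) ‖w‖).norm_image_sub_le_of_norm_hasFDerivWithin_le
    (fun u _ => (hgder u).hasFDerivWithinAt) hbound
    (Metric.mem_closedBall_self (norm_nonneg w))
    (by rw [Metric.mem_closedBall, dist_zero_right])
  have hg0 : g 0 = 0 := by simp [hg]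
  have := hmv
  rw [hg0, sub_zero, sub_zero] at this
  calc ‖g w‖ ≤ ε * ‖w‖ * ‖w‖ := this
    _ = ε * ‖w‖^2 := by ring

/-- second difference quotients converge locally uniformly to z·conj z. -/
theorem approx_zzbar_of_mixed_wirt_ne_zero
    (ρ : ℂ → ℂ) (hρ : ContDiff ℝ 2 ρ) (z₀ : ℂ)
    (h : wirt (awirt ρ) z₀ ≠ 0)
    (K : Set ℂ) (hK : IsCompact K) :
    TendstoUniformlyOn
      (fun (h' : ℝ) (z : ℂ) =>
        (ρ (z₀ + h' * z) + ρ (z₀ - h' * z) + ρ (z₀ + Complex.I * h' * z)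
          + ρ (z₀ - Complex.I * h' * z) - 4 * ρ z₀)
          / (4 * (h' : ℂ)^2 * wirt (awirt ρ) z₀))
      (fun z => z * starRingEnd ℂ z)
      (nhdsWithin (0 : ℝ) (Set.Ioi 0)) K := by
  set c := wirt (awirt ρ) z₀ with hc
  set A := fderiv ℝ ρ z₀ with hA
  set B := fderiv ℝ (fderiv ℝ ρ) z₀ with hB
  have hc4 : B 1 1 + B Complex.I Complex.I = 4 * c := by
    rw [hc, wirt_awirt_eq ρ hρ z₀]; ring
  obtain ⟨M, hM1, hMK⟩ : ∃ M : ℝ, 1 ≤ M ∧ ∀ z ∈ K, ‖z‖ ≤ M := by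
    obtain ⟨R, hR⟩ := hK.isBounded.exists_norm_le
    exact ⟨max R 1, le_max_right _ _, fun z hz => (hR z hz).trans (le_max_left _ _)⟩
  have hM0 : 0 < M := lt_of_lt_of_le one_pos hM1
  rw [Metric.tendstoUniformlyOn_iff]
  intro ε hε
  have hcpos : 0 < ‖c‖ := norm_pos_iff.2 h
  set ε' : ℝ := ε * ‖c‖ / (2 * M^2) with hε'
  have hε'pos : 0 < ε' := by positivity
  obtain ⟨δ, hδpos, hδ⟩ := taylor_bound ρ hρ z₀ hε'pos
  have hmem : Set.Ioo (0:ℝ) (δ / M) ∈ nhdsWithin (0:ℝ) (Set.Ioi 0) :=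
    Ioo_mem_nhdsGT_of_mem ⟨le_rfl, by positivity⟩
  filter_upwards [hmem] with t ht z hzK
  obtain ⟨ht0, htδ⟩ := ht
  set g : ℂ → ℂ := fun w => ρ (z₀ + w) - ρ z₀ - A w - (1/2 : ℝ) • B w w with hg
  -- norms of the four increments
  have hzM : ‖z‖ ≤ M := hMK z hzK
  have hwsmall : ∀ w : ℂ, ‖w‖ = t * ‖z‖ → ‖g w‖ ≤ ε' * (t * M)^2 := by
    intro w hw
    have h1 : ‖w‖ < δ := by
      rw [hw]
      calc t * ‖z‖ ≤ t * M := by gcongr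
        _ < (δ / M) * M := by gcongr
        _ = δ := by field_simp
    calc ‖g w‖ ≤ ε' * ‖w‖^2 := hδ w h1
      _ ≤ ε' * (t * M)^2 := by rw [hw]; gcongr
  set w₁ : ℂ := (t:ℂ) * z with hw₁
  set w₃ : ℂ := Complex.I * (t:ℂ) * z with hw₃
  have hnw₁ : ‖w₁‖ = t * ‖z‖ := by
    rw [hw₁, norm_mul, Complex.norm_real, Real.norm_eq_abs, abs_of_pos ht0]
  have hnw₃ : ‖w₃‖ = t * ‖z‖ := by
    rw [hw₃, norm_mul, norm_mul, Complex.norm_I, one_mul,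
      Complex.norm_real, Real.norm_eq_abs, abs_of_pos ht0]
  have hnw₂ : ‖-w₁‖ = t * ‖z‖ := by rw [norm_neg]; exact hnw₁
  have hnw₄ : ‖-w₃‖ = t * ‖z‖ := by rw [norm_neg]; exact hnw₃
  -- numerator identity
  have hquad : B w₁ w₁ + B w₃ w₃ = (t:ℂ)^2 * ((z * starRingEnd ℂ z) * (4 * c)) := by
    have e1 : w₁ = t • z := by rw [hw₁, Complex.real_smul]
    have e3 : w₃ = t • (Complex.I * z) := by
      rw [hw₃, Complex.real_smul]; ring
    rw [e1, e3]
    simp only [map_smul, ContinuousLinearMap.smul_apply, ContinuousLinearMap.map_smul]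
    rw [← hc4, ← bilin_sum B z]
    push_cast [Complex.real_smul, smul_eq_mul]
    ring
  have hnum : ρ (z₀ + w₁) + ρ (z₀ - w₁) + ρ (z₀ + w₃) + ρ (z₀ - w₃) - 4 * ρ z₀
      = (g w₁ + g (-w₁) + g w₃ + g (-w₃)) + 4 * (t:ℂ)^2 * c * (z * starRingEnd ℂ z) := by
    have e2 : ∀ w : ℂ, z₀ - w = z₀ + (-w) := by intro w; ring
    rw [e2 w₁, e2 w₃]
    simp only [hg, map_neg, ContinuousLinearMap.neg_apply, neg_neg]
    push_cast [Complex.real_smul, smul_eq_mul]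
    linear_combination hquad
  have ht0' : (t:ℂ) ≠ 0 := by exact_mod_cast ne_of_gt ht0
  have hdiff : (fun z => z * starRingEnd ℂ z) z
      - (ρ (z₀ + ↑t * z) + ρ (z₀ - ↑t * z) + ρ (z₀ + Complex.I * ↑t * z)
          + ρ (z₀ - Complex.I * ↑t * z) - 4 * ρ z₀) / (4 * (t:ℂ)^2 * c)
      = -(g w₁ + g (-w₁) + g w₃ + g (-w₃)) / (4 * (t:ℂ)^2 * c) := by
    rw [show z₀ + ↑t * z = z₀ + w₁ from rfl, show z₀ - ↑t * z = z₀ - w₁ from rfl,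
      show z₀ + Complex.I * ↑t * z = z₀ + w₃ from rfl,
      show z₀ - Complex.I * ↑t * z = z₀ - w₃ from rfl, hnum]
    field_simp
    ring
  rw [dist_eq_norm, hdiff, norm_div, norm_neg]
  have hden : ‖4 * (t:ℂ)^2 * c‖ = 4 * t^2 * ‖c‖ := by
    rw [norm_mul, norm_mul, norm_pow, Complex.norm_real, Real.norm_eq_abs,
      abs_of_pos ht0]
    norm_num
  have hnumbound : ‖g w₁ + g (-w₁) + g w₃ + g (-w₃)‖ ≤ 4 * (ε' * (t * M)^2) := by
    calc ‖g w₁ + g (-w₁) + g w₃ + g (-w₃)‖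
        ≤ ‖g w₁ + g (-w₁) + g w₃‖ + ‖g (-w₃)‖ := norm_add_le _ _
      _ ≤ (‖g w₁ + g (-w₁)‖ + ‖g w₃‖) + ‖g (-w₃)‖ := by gcongr; exact norm_add_le _ _
      _ ≤ ((‖g w₁‖ + ‖g (-w₁)‖) + ‖g w₃‖) + ‖g (-w₃)‖ := by gcongr; exact norm_add_le _ _
      _ ≤ ((ε' * (t * M)^2 + ε' * (t * M)^2) + ε' * (t * M)^2) + ε' * (t * M)^2 := by
          gcongr <;> [exact hwsmall _ hnw₁; exact hwsmall _ hnw₂;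
            exact hwsmall _ hnw₃; exact hwsmall _ hnw₄]
      _ = 4 * (ε' * (t * M)^2) := by ring
  rw [hden]
  calc ‖g w₁ + g (-w₁) + g w₃ + g (-w₃)‖ / (4 * t^2 * ‖c‖)
      ≤ (4 * (ε' * (t * M)^2)) / (4 * t^2 * ‖c‖) := by gcongr
    _ = (ε' * M^2) / ‖c‖ := by
        rw [show 4 * (ε' * (t * M)^2) = (4*t^2) * (ε' * M^2) by ring,
          show 4 * t^2 * ‖c‖ = (4*t^2) * ‖c‖ by ring,
          mul_div_mul_left _ _ (by positivity : (0:ℝ) < 4*t^2).ne']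
    _ = ε / 2 := by
        rw [hε', div_mul_eq_mul_div, div_div,
          show ε * ‖c‖ * M^2 = (‖c‖*M^2) * ε by ring,
          show 2 * M^2 * ‖c‖ = (‖c‖*M^2) * 2 by ring,
          mul_div_mul_left _ _ (by positivity : (0:ℝ) < ‖c‖*M^2).ne']
    _ < ε := by linarith
end

section
/- Let ρ : ℂ → ℂ be twice continuously real-differentiable and not ℝ-affine, K ⊆ ℂ compact, and ε > 0. Then there exist ℂ-affine maps φ : ℂ → ℂ⁴ and ψ : ℂ⁴ → ℂ such that at least one of the following holds: sup_{z∈K} |ψ(ρ^{×4}(φ(z))) − z·conj(z)| < ε, or sup_{z∈K} |ψ(ρ^{×4}(φ(z))) − z²| < ε, or sup_{z∈K} |ψ(ρ^{×4}(φ(z))) − conj(z)²| < ε. -/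
open Complex Metric

lemma bexpand (B : ℂ →L[ℝ] ℂ →L[ℝ] ℂ) (u v : ℂ) :
    B u v = (u.re * v.re : ℝ) • B 1 1 + (u.re * v.im : ℝ) • B 1 I
      + (u.im * v.re : ℝ) • B I 1 + (u.im * v.im : ℝ) • B I I := by
  have hu : u = u.re • (1 : ℂ) + u.im • I := by
    simp [Complex.real_smul, Complex.re_add_im]
  have hv : v = v.re • (1 : ℂ) + v.im • I := by
    simp [Complex.real_smul, Complex.re_add_im]
  conv_lhs => rw [hu, hv]
  simp only [map_add, map_smul, ContinuousLinearMap.add_apply,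
    ContinuousLinearMap.smul_apply, smul_add, smul_smul]
  module

lemma case1 (B : ℂ →L[ℝ] ℂ →L[ℝ] ℂ) (z : ℂ) :
    B z z + B (I * z) (I * z) = (B 1 1 + B I I) * (z * starRingEnd ℂ z) := by
  rw [bexpand B z z, bexpand B (I * z) (I * z), Complex.mul_conj]
  simp only [Complex.mul_re, Complex.mul_im, Complex.I_re, Complex.I_im,
    Complex.real_smul, Complex.normSq_apply]
  push_cast
  ring

lemma case2 (B : ℂ →L[ℝ] ℂ →L[ℝ] ℂ) (hII : B I I = -B 1 1) (z : ℂ) :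
    2 * B z z - I * B ((1 + I) * z) ((1 + I) * z)
      = (2 * B 1 1 - I * (B 1 I + B I 1)) * z ^ 2 := by
  rw [bexpand B z z, bexpand B ((1 + I) * z) ((1 + I) * z), hII]
  simp only [Complex.ext_iff, Complex.mul_re, Complex.mul_im, Complex.add_re, Complex.add_im,
    Complex.sub_re, Complex.sub_im, Complex.one_re, Complex.one_im, Complex.I_re, Complex.I_im,
    Complex.real_smul, Complex.ofReal_re, Complex.ofReal_im, Complex.neg_re, Complex.neg_im,
    Complex.re_ofNat, Complex.im_ofNat, pow_two, Complex.smul_re, Complex.smul_im]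
  constructor <;> ring

lemma case3 (B : ℂ →L[ℝ] ℂ →L[ℝ] ℂ) (hII : B I I = -B 1 1) (z : ℂ) :
    2 * B z z + I * B ((1 + I) * z) ((1 + I) * z)
      = (2 * B 1 1 + I * (B 1 I + B I 1)) * (starRingEnd ℂ z) ^ 2 := by
  rw [bexpand B z z, bexpand B ((1 + I) * z) ((1 + I) * z), hII]
  simp only [Complex.ext_iff, Complex.mul_re, Complex.mul_im, Complex.add_re, Complex.add_im,
    Complex.sub_re, Complex.sub_im, Complex.one_re, Complex.one_im, Complex.I_re, Complex.I_im,
    Complex.real_smul, Complex.ofReal_re, Complex.ofReal_im, Complex.neg_re, Complex.neg_im,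
    Complex.re_ofNat, Complex.im_ofNat, pow_two, Complex.smul_re, Complex.smul_im,
    Complex.conj_re, Complex.conj_im]
  constructor <;> ring

lemma taylor2 {f : ℂ → ℂ} (hf : ContDiff ℝ 2 f) (w : ℂ)
    (hsymm : ∀ x y : ℂ, fderiv ℝ (fderiv ℝ f) w x y = fderiv ℝ (fderiv ℝ f) w y x)
    {ε : ℝ} (hε : 0 < ε) :
    ∃ δ > 0, ∀ u : ℂ, ‖u‖ ≤ δ →
      ‖f (w + u) - f w - fderiv ℝ f w u
        - (1/2 : ℝ) • fderiv ℝ (fderiv ℝ f) w u u‖ ≤ ε * ‖u‖ ^ 2 := by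
  set g := fderiv ℝ f with hgdef
  have hg : ContDiff ℝ 1 g := hf.fderiv_right (le_refl 2)
  have hgd : Differentiable ℝ g := hg.differentiable one_ne_zero
  have hfd : Differentiable ℝ f := hf.differentiable two_ne_zero
  set B := fderiv ℝ g w with hBdef
  have hcont : Continuous (fderiv ℝ g) := hg.continuous_fderiv one_ne_zero
  have hca : ContinuousAt (fderiv ℝ g) w := hcont.continuousAt
  replace hca := (Metric.continuousAt_iff (β := ℂ →L[ℝ] ℂ →L[ℝ] ℂ)).mp hca
  obtain ⟨δ, hδ, hδ'⟩ := hca ε hε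
  refine ⟨δ / 2, by positivity, fun u hu => ?_⟩
  -- Step A : on the closed ball of radius δ/2, ‖g (w+v) - g w - B v‖ ≤ ε ‖v‖
  have stepA : ∀ v : ℂ, ‖v‖ ≤ δ / 2 → ‖g (w + v) - g w - B v‖ ≤ ε * ‖v‖ := by
    intro v hv
    have hmean := Convex.norm_image_sub_le_of_norm_hasFDerivWithin_le
      (f := fun x => g x - B x) (f' := fun x => fderiv ℝ g x - B)
      (s := closedBall w (δ / 2)) (C := ε) (x := w) (y := w + v)
      (fun x hx => ((hgd x).hasFDerivAt.sub (B.hasFDerivAt)).hasFDerivWithinAt)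
      (fun x hx => by
        have hxw : dist x w < δ := lt_of_le_of_lt (mem_closedBall.1 hx) (by linarith)
        have := le_of_lt (hδ' hxw)
        rwa [dist_eq_norm (E := ℂ →L[ℝ] ℂ →L[ℝ] ℂ)] at this)
      (convex_closedBall _ _) (mem_closedBall_self (by positivity))
      (by simpa [mem_closedBall, dist_eq_norm] using hv)
    have : g (w + v) - B (w + v) - (g w - B w) = g (w + v) - g w - B v := by
      rw [map_add]; abel
    rw [show w + v - w = v from by abel] at hmean
    rwa [this] at hmean
  -- Step B : mean value on the segment from 0 to u for the remainder
  have hru : ∀ v : ℂ, HasFDerivAt (fun x => (1/2 : ℝ) • (B x x)) (B v) v := by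
    intro v
    have h1 := (B.hasFDerivAt_of_bilinear (hasFDerivAt_id v) (hasFDerivAt_id v)).const_smul
      ((1:ℝ)/2)
    have h2 : (1/2 : ℝ) • (B.precompR ℂ (id v) (ContinuousLinearMap.id ℝ ℂ)
        + B.precompL ℂ (ContinuousLinearMap.id ℝ ℂ) (id v)) = B v := by
      ext x
      simp only [ContinuousLinearMap.smul_apply, ContinuousLinearMap.add_apply,
        ContinuousLinearMap.precompR_apply, ContinuousLinearMap.precompL_apply,
        ContinuousLinearMap.coe_id', id_eq, id, ContinuousLinearMap.compL_apply,
        ContinuousLinearMap.coe_comp', Function.comp, ContinuousLinearMap.id_apply]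
      rw [hsymm x v]
      rw [← two_smul ℝ (B v x), smul_smul]
      norm_num
    rw [h2] at h1
    exact h1
  have hrd : ∀ v : ℂ, HasFDerivAt
      (fun x => f (w + x) - g w x - (1/2 : ℝ) • (B x x))
      (g (w + v) - g w - B v) v := by
    intro v
    have hcomp : HasFDerivAt (fun x : ℂ => f (w + x)) (g (w + v)) v := by
      have := (hfd (w + v)).hasFDerivAt.comp v ((hasFDerivAt_id v).const_add w)
      exact this
    exact (hcomp.sub ((g w).hasFDerivAt)).sub (hru v)
  have hmean := Convex.norm_image_sub_le_of_norm_hasFDerivWithin_le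
    (f := fun x => f (w + x) - g w x - (1/2 : ℝ) • (B x x))
    (f' := fun v => g (w + v) - g w - B v)
    (s := closedBall 0 ‖u‖) (C := ε * ‖u‖) (x := 0) (y := u)
    (fun v hv => (hrd v).hasFDerivWithinAt)
    (fun v hv => by
      have hv' : ‖v‖ ≤ ‖u‖ := by simpa [mem_closedBall, dist_eq_norm] using hv
      calc ‖g (w + v) - g w - B v‖ ≤ ε * ‖v‖ := stepA v (le_trans hv' hu)
        _ ≤ ε * ‖u‖ := by nlinarith [norm_nonneg v, norm_nonneg u])
    (convex_closedBall _ _)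
    (mem_closedBall_self (norm_nonneg u))
    (by simp [mem_closedBall, dist_eq_norm])
  simp only [add_zero, map_zero, smul_zero, sub_zero] at hmean
  have harr : f (w + u) - f w - g w u - (1/2 : ℝ) • (B u u)
      = f (w + u) - g w u - (1/2 : ℝ) • (B u u) - f w := by abel
  rw [harr]
  calc ‖f (w + u) - g w u - (1/2 : ℝ) • (B u u) - f w‖
      ≤ ε * ‖u‖ * ‖u‖ := hmean
    _ = ε * ‖u‖ ^ 2 := by ring

lemma assemble (ρ : ℂ → ℂ) (hρ : ContDiff ℝ 2 ρ) (w : ℂ)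
    (hsymm : ∀ x y : ℂ, fderiv ℝ (fderiv ℝ ρ) w x y = fderiv ℝ (fderiv ℝ ρ) w y x)
    (a c : Fin 4 → ℂ) (ha : ∀ i, ‖a i‖ ≤ 2) (hc : ∀ i, ‖c i‖ ≤ 1)
    (κ : ℂ) (hκ : κ ≠ 0) (T : ℂ → ℂ)
    (h1 : ∀ z : ℂ, ∑ i, c i * (fderiv ℝ ρ w (a i * z)) = 0)
    (h2 : ∀ z : ℂ, ∑ i, c i * (fderiv ℝ (fderiv ℝ ρ) w (a i * z) (a i * z)) = κ * T z)
    (K : Set ℂ) (hK : IsCompact K) (ε : ℝ) (hε : 0 < ε) :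
    ∃ (A : ℂ →ₗ[ℂ] (Fin 4 → ℂ)) (b : Fin 4 → ℂ) (B : (Fin 4 → ℂ) →ₗ[ℂ] ℂ) (c₀ : ℂ),
      ∀ z ∈ K, ‖B (fun i => ρ ((A z + b) i)) + c₀ - T z‖ < ε := by
  classical
  have hκa : 0 < ‖κ‖ := norm_pos_iff.mpr hκ
  obtain ⟨R₀, hR₀pos, hR₀⟩ := hK.isBounded.exists_pos_norm_le
  obtain ⟨R, hR1, hR⟩ : ∃ R : ℝ, 1 ≤ R ∧ ∀ z ∈ K, ‖z‖ ≤ R :=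
    ⟨max R₀ 1, le_max_right _ _, fun z hz => le_trans (hR₀ z hz) (le_max_left _ _)⟩
  have hRpos : 0 < R := lt_of_lt_of_le one_pos hR1
  obtain ⟨ε₁, hε₁, hε₁eq⟩ : ∃ ε₁ : ℝ, 0 < ε₁ ∧ ε₁ * (64 * R ^ 2) = ε * ‖κ‖ :=
    ⟨ε * ‖κ‖ / (64 * R ^ 2), by positivity, by field_simp⟩
  obtain ⟨δ, hδ, htay⟩ := taylor2 hρ w hsymm hε₁
  obtain ⟨h, hh, hhR⟩ : ∃ h : ℝ, 0 < h ∧ h * (2 * R) = δ :=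
    ⟨δ / (2 * R), by positivity, by field_simp⟩
  have hhc : ((h:ℂ)) ≠ 0 := by exact_mod_cast hh.ne'
  set g := fderiv ℝ ρ with hgdef
  set B2 := fderiv ℝ (fderiv ℝ ρ) w with hB2def
  obtain ⟨d, hdinv, hdabs⟩ : ∃ d : ℂ, d * ((h:ℂ)^2 * κ / 2) = 1
      ∧ ‖d‖ = 2 / (h^2 * ‖κ‖) := by
    refine ⟨2 / ((h:ℂ)^2 * κ), by field_simp, ?_⟩
    rw [norm_div, norm_mul, norm_pow]
    simp [Complex.norm_real, abs_of_pos hh]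
  set Amap : ℂ →ₗ[ℂ] (Fin 4 → ℂ) := LinearMap.pi (fun i => ((h:ℂ) * a i) • LinearMap.id)
    with hAdef
  set bvec : Fin 4 → ℂ := fun _ => w with hbdef
  set Bmap : (Fin 4 → ℂ) →ₗ[ℂ] ℂ := d • (∑ i, c i • (LinearMap.proj i : (Fin 4 → ℂ) →ₗ[ℂ] ℂ))
    with hBmdef
  set c₀ : ℂ := -(d * ((∑ i, c i) * ρ w)) with hc₀def
  refine ⟨Amap, bvec, Bmap, c₀, fun z hz => ?_⟩
  set u : Fin 4 → ℂ := fun i => (h:ℂ) * (a i * z) with hudef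
  have hui : ∀ i, u i = (h:ℝ) • (a i * z) := by
    intro i; simp only [hudef, Complex.real_smul]
  have hvec : ∀ i, ρ ((Amap z + bvec) i) = ρ (w + u i) := by
    intro i
    congr 1
    simp only [Pi.add_apply, hAdef, hbdef, hudef, LinearMap.pi_apply, LinearMap.smul_apply,
      LinearMap.id_coe, id_eq, smul_eq_mul]
    ring
  set r : Fin 4 → ℂ := fun i => ρ (w + u i) - ρ w - g w (u i) - (1/2 : ℝ) • (B2 (u i) (u i))
    with hrdef
  have hgu : ∀ i, g w (u i) = (h:ℂ) * g w (a i * z) := by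
    intro i; rw [hui, map_smul, Complex.real_smul]
  have hB2u : ∀ i, B2 (u i) (u i) = (h:ℂ)^2 * (B2 (a i * z) (a i * z)) := by
    intro i
    simp only [hui, map_smul, ContinuousLinearMap.smul_apply, smul_smul]
    rw [Complex.real_smul]
    push_cast
    ring
  have hsum : ∑ i, c i * ρ (w + u i)
      = (∑ i, c i * r i) + (∑ i, c i) * ρ w + ((h:ℂ)^2 * κ / 2) * T z := by
    have hterm : ∀ i : Fin 4, c i * ρ (w + u i)
        = c i * r i + c i * ρ w + (h:ℂ) * (c i * g w (a i * z))
          + ((h:ℂ)^2 / 2) * (c i * (B2 (a i * z) (a i * z))) := by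
      intro i
      simp only [hrdef, hgu, hB2u, Complex.real_smul]
      push_cast
      ring
    rw [Finset.sum_congr rfl (fun i _ => hterm i)]
    rw [Finset.sum_add_distrib, Finset.sum_add_distrib, Finset.sum_add_distrib,
      ← Finset.mul_sum, ← Finset.mul_sum, h1 z, h2 z, ← Finset.sum_mul]
    ring
  have hE : Bmap (fun i => ρ ((Amap z + bvec) i)) + c₀ - T z = d * ∑ i, c i * r i := by
    have hBev : Bmap (fun i => ρ ((Amap z + bvec) i)) = d * ∑ i, c i * ρ (w + u i) := by
      simp only [hBmdef, LinearMap.smul_apply, LinearMap.coe_sum, Finset.sum_apply,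
        LinearMap.smul_apply, LinearMap.proj_apply, smul_eq_mul]
      congr 1
      exact Finset.sum_congr rfl (fun i _ => by rw [hvec i])
    rw [hBev, hsum, hc₀def]
    linear_combination T z * hdinv
  rw [hE]
  have hub : ∀ i, ‖u i‖ ≤ δ := by
    intro i
    have heq : ‖u i‖ = h * (‖a i‖ * ‖z‖) := by
      simp [hudef, Complex.norm_real, abs_of_pos hh]
    rw [heq]
    have h1' : ‖a i‖ * ‖z‖ ≤ 2 * R :=
      mul_le_mul (ha i) (hR z hz) (norm_nonneg z) (by norm_num)
    calc h * (‖a i‖ * ‖z‖) ≤ h * (2 * R) :=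
          mul_le_mul_of_nonneg_left h1' (le_of_lt hh)
      _ = δ := hhR
  have hr : ∀ i, ‖r i‖ ≤ ε₁ * (2 * h * R)^2 := by
    intro i
    refine le_trans (htay (u i) (hub i)) ?_
    have hun : ‖u i‖ ≤ 2 * h * R := le_trans (hub i) (le_of_eq (by linarith [hhR]))
    have hsq : ‖u i‖^2 ≤ (2*h*R)^2 := pow_le_pow_left₀ (norm_nonneg (u i)) hun 2
    exact mul_le_mul_of_nonneg_left hsq (le_of_lt hε₁)
  have hSsum : ‖∑ i, c i * r i‖ ≤ 4 * (ε₁ * (2*h*R)^2) := by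
    calc ‖∑ i, c i * r i‖ ≤ ∑ i, ‖c i * r i‖ := norm_sum_le _ _
      _ ≤ ∑ _i : Fin 4, ε₁ * (2*h*R)^2 := by
          refine Finset.sum_le_sum (fun i _ => ?_)
          rw [norm_mul]
          calc ‖c i‖ * ‖r i‖ ≤ 1 * ‖r i‖ := by
                apply mul_le_mul_of_nonneg_right _ (norm_nonneg (r i))
                simpa using hc i
            _ = ‖r i‖ := one_mul _
            _ ≤ ε₁ * (2*h*R)^2 := hr i
      _ = 4 * (ε₁ * (2*h*R)^2) := by simp [Finset.sum_const]
  have hfin : ‖d * ∑ i, c i * r i‖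
      ≤ (2 / (h^2 * ‖κ‖)) * (4 * (ε₁ * (2*h*R)^2)) := by
    rw [norm_mul, hdabs]
    apply mul_le_mul_of_nonneg_left _ (by positivity)
    exact hSsum
  have heq2 : (2 / (h^2 * ‖κ‖)) * (4 * (ε₁ * (2*h*R)^2)) = ε / 2 := by
    have hk : h^2 * ‖κ‖ ≠ 0 := by positivity
    rw [div_mul_eq_mul_div, div_eq_iff hk]
    linear_combination (h^2/2) * hε₁eq
  rw [heq2] at hfin
  linarith

lemma habs_a1 : ∀ i, ‖(![1, I, -1, -I] : Fin 4 → ℂ) i‖ ≤ 2 := by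
  intro i; fin_cases i <;> norm_num [Complex.norm_I]

lemma habs_a2 : ∀ i, ‖(![1, -1, 1 + I, -(1 + I)] : Fin 4 → ℂ) i‖ ≤ 2 := by
  intro i
  fin_cases i <;>
    simp [Complex.norm_def, Complex.normSq_apply] <;>
    nlinarith [Real.sq_sqrt (by norm_num : (0:ℝ) ≤ 1+1), Real.sqrt_nonneg (1+1:ℝ)]

lemma habs_c1 : ∀ i, ‖(![1/4, 1/4, 1/4, 1/4] : Fin 4 → ℂ) i‖ ≤ 1 := by
  intro i; fin_cases i <;> norm_num [norm_div, Complex.norm_ofNat]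

lemma habs_c2 : ∀ i, ‖(![1/4, 1/4, -(I/8), -(I/8)] : Fin 4 → ℂ) i‖ ≤ 1 := by
  intro i; fin_cases i <;> norm_num [norm_div, Complex.norm_ofNat, Complex.norm_I]

lemma habs_c3 : ∀ i, ‖(![1/4, 1/4, I/8, I/8] : Fin 4 → ℂ) i‖ ≤ 1 := by
  intro i; fin_cases i <;> norm_num [norm_div, Complex.norm_ofNat, Complex.norm_I]

set_option maxHeartbeats 1000000 in
/-- if ρ is C² (real sense) and not ℝ-affine then one of z·conj z, z², conj(z)²
can be uniformly approximated on compacts by a shallow network ψ ∘ ρ^{×4} ∘ φ of width 4. -/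
theorem approx_quadratic_of_not_affine
    (ρ : ℂ → ℂ) (hρ : ContDiff ℝ 2 ρ)
    (hna : ¬ ∃ (A : ℂ →ₗ[ℝ] ℂ) (b : ℂ), ∀ z, ρ z = A z + b)
    (K : Set ℂ) (hK : IsCompact K) (ε : ℝ) (hε : 0 < ε) :
    ∃ (A : ℂ →ₗ[ℂ] (Fin 4 → ℂ)) (b : Fin 4 → ℂ)
      (B : (Fin 4 → ℂ) →ₗ[ℂ] ℂ) (c : ℂ),
      (∀ z ∈ K, ‖
          (B (fun i => ρ ((A z + b) i)) + c - z * starRingEnd ℂ z)‖ < ε) ∨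
      (∀ z ∈ K, ‖
          (B (fun i => ρ ((A z + b) i)) + c - z^2)‖ < ε) ∨
      (∀ z ∈ K, ‖
          (B (fun i => ρ ((A z + b) i)) + c - (starRingEnd ℂ z)^2)‖ < ε) := by
  have hfd : Differentiable ℝ ρ := hρ.differentiable two_ne_zero
  have hgd : Differentiable ℝ (fderiv ℝ ρ) :=
    (hρ.fderiv_right (le_refl 2)).differentiable one_ne_zero
  -- there is a point where the second derivative is nonzero
  have hex : ∃ w, fderiv ℝ (fderiv ℝ ρ) w ≠ 0 := by
    by_contra hcon
    push_neg at hcon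
    apply hna
    have hconst : ∀ x, fderiv ℝ ρ x = fderiv ℝ ρ 0 := fun x =>
      is_const_of_fderiv_eq_zero hgd hcon x 0
    set A₀ := fderiv ℝ ρ 0 with hA₀
    have hdiff : Differentiable ℝ (fun x => ρ x - A₀ x) :=
      hfd.sub A₀.differentiable
    have hzero : ∀ x, fderiv ℝ (fun x => ρ x - A₀ x) x = 0 := by
      intro x
      have h1 : HasFDerivAt (fun x => ρ x - A₀ x) (fderiv ℝ ρ x - A₀) x :=
        (hfd x).hasFDerivAt.sub A₀.hasFDerivAt
      rw [h1.fderiv, hconst x]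
      exact sub_self _
    have hcst : ∀ x, ρ x - A₀ x = ρ 0 - A₀ 0 := fun x =>
      is_const_of_fderiv_eq_zero hdiff hzero x 0
    refine ⟨A₀.toLinearMap, ρ 0, fun z => ?_⟩
    have := hcst z
    simp only [map_zero, sub_zero] at this
    simp only [ContinuousLinearMap.coe_coe]
    linear_combination this
  obtain ⟨w, hw⟩ := hex
  set B := fderiv ℝ (fderiv ℝ ρ) w with hBdef
  have hsymm : ∀ x y : ℂ, B x y = B y x :=
    second_derivative_symmetric (fun y => (hfd y).hasFDerivAt) ((hgd w).hasFDerivAt)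
  by_cases hQ : B 1 1 + B I I = 0
  · -- zz̄ coefficient vanishes
    have hII : B I I = -B 1 1 := by linear_combination hQ
    by_cases hP : 2 * B 1 1 - I * (B 1 I + B I 1) = 0
    · -- target conj z ^ 2
      have hκ : (2 * B 1 1 + I * (B 1 I + B I 1)) / 4 ≠ 0 := by
        intro hz
        apply hw
        have hz4 : 2 * B 1 1 + I * (B 1 I + B I 1) = 0 :=
          (div_eq_zero_iff.mp hz).resolve_right (by norm_num)
        have h11 : B 1 1 = 0 := by
          linear_combination (hP + hz4) / 4
        have h1I : B 1 I = 0 := by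
          have hs := hsymm 1 I
          have hmul : I * (B 1 I + B I 1) = 0 := by linear_combination (hz4 - hP) / 2
          have h2 : B 1 I + B I 1 = 0 := (mul_eq_zero.mp hmul).resolve_left I_ne_zero
          linear_combination (1/2) * h2 + (1/2) * hs
        have hI1 : B I 1 = 0 := by rw [← hsymm 1 I]; exact h1I
        have hII0 : B I I = 0 := by rw [hII, h11, neg_zero]
        ext u v
        rw [bexpand]
        simp [h11, h1I, hI1, hII0]
      obtain ⟨A, b, Bm, c₀, hgoal⟩ := assemble ρ hρ w hsymm
        ![1, -1, 1 + I, -(1 + I)] ![1/4, 1/4, I/8, I/8]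
        habs_a2 habs_c3
        ((2 * B 1 1 + I * (B 1 I + B I 1)) / 4) hκ (fun z => (starRingEnd ℂ z)^2)
        (by
          intro z
          simp only [Fin.sum_univ_four, Matrix.cons_val_zero, Matrix.cons_val_one,
            Matrix.head_cons, Matrix.cons_val_two, Matrix.tail_cons, Matrix.cons_val_three]
          rw [show (-1 : ℂ) * z = -(1 * z) by ring, show (-(1+I)) * z = -((1+I) * z) by ring]
          rw [map_neg, map_neg]
          ring)
        (by
          intro z
          simp only [Fin.sum_univ_four, Matrix.cons_val_zero, Matrix.cons_val_one,
            Matrix.head_cons, Matrix.cons_val_two, Matrix.tail_cons, Matrix.cons_val_three]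
          rw [show (-1 : ℂ) * z = -(1 * z) by ring, show (-(1+I)) * z = -((1+I) * z) by ring]
          rw [map_neg, map_neg]
          simp only [ContinuousLinearMap.neg_apply, map_neg, neg_neg, one_mul]
          linear_combination (1/4) * case3 B hII z)
        K hK ε hε
      exact ⟨A, b, Bm, c₀, Or.inr (Or.inr hgoal)⟩
    · -- target z ^ 2
      have hκ : (2 * B 1 1 - I * (B 1 I + B I 1)) / 4 ≠ 0 :=
        div_ne_zero hP (by norm_num)
      obtain ⟨A, b, Bm, c₀, hgoal⟩ := assemble ρ hρ w hsymm
        ![1, -1, 1 + I, -(1 + I)] ![1/4, 1/4, -(I/8), -(I/8)]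
        habs_a2 habs_c2
        ((2 * B 1 1 - I * (B 1 I + B I 1)) / 4) hκ (fun z => z^2)
        (by
          intro z
          simp only [Fin.sum_univ_four, Matrix.cons_val_zero, Matrix.cons_val_one,
            Matrix.head_cons, Matrix.cons_val_two, Matrix.tail_cons, Matrix.cons_val_three]
          rw [show (-1 : ℂ) * z = -(1 * z) by ring, show (-(1+I)) * z = -((1+I) * z) by ring]
          rw [map_neg, map_neg]
          ring)
        (by
          intro z
          simp only [Fin.sum_univ_four, Matrix.cons_val_zero, Matrix.cons_val_one,
            Matrix.head_cons, Matrix.cons_val_two, Matrix.tail_cons, Matrix.cons_val_three]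
          rw [show (-1 : ℂ) * z = -(1 * z) by ring, show (-(1+I)) * z = -((1+I) * z) by ring]
          rw [map_neg, map_neg]
          simp only [ContinuousLinearMap.neg_apply, map_neg, neg_neg, one_mul]
          linear_combination (1/4) * case2 B hII z)
        K hK ε hε
      exact ⟨A, b, Bm, c₀, Or.inr (Or.inl hgoal)⟩
  · -- target z * conj z
    have hκ : (B 1 1 + B I I) / 2 ≠ 0 :=
      div_ne_zero hQ (by norm_num)
    obtain ⟨A, b, Bm, c₀, hgoal⟩ := assemble ρ hρ w hsymm
      ![1, I, -1, -I] ![1/4, 1/4, 1/4, 1/4]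
      habs_a1 habs_c1
      ((B 1 1 + B I I) / 2) hκ (fun z => z * starRingEnd ℂ z)
      (by
        intro z
        simp only [Fin.sum_univ_four, Matrix.cons_val_zero, Matrix.cons_val_one,
          Matrix.head_cons, Matrix.cons_val_two, Matrix.tail_cons, Matrix.cons_val_three]
        rw [show (-1 : ℂ) * z = -(1 * z) by ring, show (-I : ℂ) * z = -(I * z) by ring]
        rw [map_neg, map_neg]
        ring)
      (by
        intro z
        simp only [Fin.sum_univ_four, Matrix.cons_val_zero, Matrix.cons_val_one,
          Matrix.head_cons, Matrix.cons_val_two, Matrix.tail_cons, Matrix.cons_val_three]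
        rw [show (-1 : ℂ) * z = -(1 * z) by ring, show (-I : ℂ) * z = -(I * z) by ring]
        rw [map_neg, map_neg]
        simp only [ContinuousLinearMap.neg_apply, map_neg, neg_neg, one_mul]
        linear_combination (1/2) * case1 B z)
      K hK ε hε
    exact ⟨A, b, Bm, c₀, Or.inl hgoal⟩
end

section
/- Every shallow complex-valued neural network of the form f = V₂ ∘ ρ^{×W} ∘ V₁ with W = n+m+1 hidden neurons, V₁ : ℂⁿ → ℂ^{n+m+1} and V₂ : ℂ^{n+m+1} → ℂ^m ℂ-affine, equals a register model: there exist L ∈ ℕ and ℂ-affine maps T₁ : ℂⁿ → ℂ^{n+m+1}, T_ℓ : ℂ^{n+m+1} → ℂ^{n+m+1} for 2 ≤ ℓ ≤ L−1, and T_L : ℂ^{n+m+1} → ℂ^m such that f = T_L ∘ ρ̃ ∘ T_{L−1} ∘ … ∘ ρ̃ ∘ T₁, where ρ̃ : ℂ^{n+m+1} → ℂ^{n+m+1} applies ρ to the (n+1)-st coordinate and the identity to all other coordinates. -/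
/-- ρ̃ : ℂ^{n+m+1} → ℂ^{n+m+1} applies ρ to the (n+1)-st coordinate (index n) and the
identity to all other coordinates. -/
def rhoTilde (n m : ℕ) (ρ : ℂ → ℂ) : (Fin (n + m + 1) → ℂ) → (Fin (n + m + 1) → ℂ) :=
  fun v i => if (i : ℕ) = n then ρ (v i) else v i

open Fin.NatCast Fin.CommRing

private lemma foldr_replicate_comp {α : Type*} (g : α → α) :
    ∀ k, (List.replicate k g).foldr (· ∘ ·) id = g^[k]
  | 0 => rfl
  | k + 1 => by
    rw [List.replicate_succ, List.foldr_cons, foldr_replicate_comp g k,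
      ← Function.iterate_succ' g k]

private lemma key (n m : ℕ) (ρ : ℂ → ℂ) (h : Fin (n + m + 1) → ℂ) :
    ∀ k, k ≤ n + m →
      ((rhoTilde n m ρ ∘ fun (s : Fin (n + m + 1) → ℂ) j => s (j + 1))^[k])
          (rhoTilde n m ρ h)
      = fun j => if ∃ t ≤ k, j + (k : Fin (n + m + 1)) =
            (n : Fin (n + m + 1)) + (t : Fin (n + m + 1))
          then ρ (h (j + (k : Fin (n + m + 1)))) else h (j + (k : Fin (n + m + 1)))
  | 0, _ => by
    funext j
    simp only [Function.iterate_zero, id_eq, Nat.cast_zero, add_zero, rhoTilde]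
    have hn : ((n : Fin (n + m + 1)) : ℕ) = n := Fin.val_cast_of_lt (by omega)
    by_cases hj : (j : ℕ) = n
    · rw [if_pos hj, if_pos ⟨0, le_rfl, by rw [Nat.cast_zero, add_zero]; exact Fin.ext (by omega)⟩]
    · rw [if_neg hj, if_neg]
      rintro ⟨t, ht, hEq⟩
      interval_cases t
      rw [Nat.cast_zero, add_zero] at hEq
      exact hj (by rw [hEq, hn])
  | k + 1, hk => by
    funext j
    rw [Function.iterate_succ_apply', Function.comp_apply,
      key n m ρ h k (by omega)]
    have hcast : ((k + 1 : ℕ) : Fin (n + m + 1)) = (k : Fin (n + m + 1)) + 1 := by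
      push_cast; ring
    have hidx : j + 1 + (k : Fin (n + m + 1)) = j + ((k + 1 : ℕ) : Fin (n + m + 1)) := by
      rw [hcast]; ring
    have hn : ((n : Fin (n + m + 1)) : ℕ) = n := Fin.val_cast_of_lt (by omega)
    have hvalcast : ∀ t : ℕ, t ≤ n + m → ((t : Fin (n + m + 1)) : ℕ) = t := fun t ht =>
      Fin.val_cast_of_lt (by omega)
    simp only [rhoTilde, hidx]
    set c := j + ((k + 1 : ℕ) : Fin (n + m + 1)) with hc
    by_cases hj : (j : ℕ) = n
    · rw [if_pos hj]
      have hjn : j = (n : Fin (n + m + 1)) := Fin.ext (by rw [hn]; exact hj)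
      have hPk1 : ∃ t ≤ k + 1, c = (n : Fin (n + m + 1)) + (t : Fin (n + m + 1)) :=
        ⟨k + 1, le_rfl, by rw [hc, hjn]⟩
      rw [if_pos hPk1, if_neg]
      rintro ⟨t, ht, hEq⟩
      rw [hc, hjn] at hEq
      have : ((k + 1 : ℕ) : Fin (n + m + 1)) = (t : Fin (n + m + 1)) :=
        add_left_cancel hEq
      have : k + 1 = t := by
        have := congrArg Fin.val this
        rwa [hvalcast (k+1) hk, hvalcast t (by omega)] at this
      omega
    · rw [if_neg hj]
      have hiff : (∃ t ≤ k, c = (n : Fin (n + m + 1)) + (t : Fin (n + m + 1))) ↔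
          (∃ t ≤ k + 1, c = (n : Fin (n + m + 1)) + (t : Fin (n + m + 1))) := by
        constructor
        · rintro ⟨t, ht, hEq⟩; exact ⟨t, by omega, hEq⟩
        · rintro ⟨t, ht, hEq⟩
          rcases Nat.lt_or_ge t (k + 1) with h' | h'
          · exact ⟨t, by omega, hEq⟩
          · exfalso
            have htk : t = k + 1 := by omega
            subst htk
            have : j = (n : Fin (n + m + 1)) := by
              have := hEq
              rw [hc] at this
              exact add_right_cancel this
            exact hj (by rw [this, hn])
      by_cases hP : ∃ t ≤ k, c = (n : Fin (n + m + 1)) + (t : Fin (n + m + 1))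
      · rw [if_pos hP, if_pos (hiff.mp hP)]
      · rw [if_neg hP, if_neg (fun h' => hP (hiff.mpr h'))]

/-- every shallow CVNN with n+m+1 hidden neurons equals a register model:
f = T_L ∘ ρ̃ ∘ T_{L-1} ∘ … ∘ ρ̃ ∘ T₁ with all Tℓ ℂ-affine. -/
theorem shallow_network_eq_register_model
    (n m : ℕ) (ρ : ℂ → ℂ)
    (V₁ : (Fin n → ℂ) →ₗ[ℂ] (Fin (n + m + 1) → ℂ)) (b₁ : Fin (n + m + 1) → ℂ)
    (V₂ : (Fin (n + m + 1) → ℂ) →ₗ[ℂ] (Fin m → ℂ)) (b₂ : Fin m → ℂ) :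
    ∃ (N : ℕ)
      (T₁ : (Fin n → ℂ) → (Fin (n + m + 1) → ℂ))
      (Tmid : Fin N → ((Fin (n + m + 1) → ℂ) → (Fin (n + m + 1) → ℂ)))
      (TL : (Fin (n + m + 1) → ℂ) → (Fin m → ℂ)),
      (∃ (A : (Fin n → ℂ) →ₗ[ℂ] (Fin (n + m + 1) → ℂ)) (c : Fin (n + m + 1) → ℂ),
        T₁ = fun x => A x + c) ∧
      (∀ i, ∃ (A : (Fin (n + m + 1) → ℂ) →ₗ[ℂ] (Fin (n + m + 1) → ℂ))
        (c : Fin (n + m + 1) → ℂ), Tmid i = fun x => A x + c) ∧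
      (∃ (A : (Fin (n + m + 1) → ℂ) →ₗ[ℂ] (Fin m → ℂ)) (c : Fin m → ℂ),
        TL = fun x => A x + c) ∧
      (fun x => V₂ (fun i => ρ ((V₁ x + b₁) i)) + b₂) =
        TL ∘ ((List.ofFn (fun i => rhoTilde n m ρ ∘ Tmid i)).foldr (· ∘ ·) id)
          ∘ rhoTilde n m ρ ∘ T₁ := by
  refine ⟨n + m, (fun x => V₁ x + b₁),
    (fun _ => fun s j => s (j + 1)),
    (fun s => V₂ (fun c => s (c - ((n + m : ℕ) : Fin (n + m + 1)))) + b₂),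
    ⟨V₁, b₁, rfl⟩,
    (fun i => ⟨LinearMap.funLeft ℂ ℂ (fun j => j + 1), 0, by
      funext s; simp [LinearMap.funLeft_apply]; rfl⟩),
    ⟨V₂ ∘ₗ LinearMap.funLeft ℂ ℂ (fun c => c - ((n + m : ℕ) : Fin (n + m + 1))), b₂, by
      funext s; simp [LinearMap.funLeft_apply]; rfl⟩, ?_⟩
  funext x
  have hfold : (List.ofFn (fun _ : Fin (n + m) =>
      rhoTilde n m ρ ∘ fun (s : Fin (n + m + 1) → ℂ) j => s (j + 1))).foldr (· ∘ ·) id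
      = (rhoTilde n m ρ ∘ fun (s : Fin (n + m + 1) → ℂ) j => s (j + 1))^[n + m] := by
    rw [List.ofFn_const, foldr_replicate_comp]
  simp only [Function.comp_apply, hfold]
  rw [key n m ρ (V₁ x + b₁) (n + m) le_rfl]
  congr 1
  apply congrArg
  funext i
  have hsub : i - ((n + m : ℕ) : Fin (n + m + 1)) + ((n + m : ℕ) : Fin (n + m + 1)) = i := by
    ring
  beta_reduce
  rw [hsub]
  rw [if_pos]
  refine ⟨((i - (n : Fin (n + m + 1))) : Fin (n + m + 1)).val, by omega, ?_⟩
  rw [Fin.cast_val_eq_self]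
  ring
end

section
/- Let ρ : ℂ → ℂ be given by ρ(z) = φ(Re(z)) for some continuous φ : ℝ → ℂ, and let n, m ∈ ℕ. Then for every function g : ℂⁿ → ℂ^m of the form g(z) = ψ(Re(Vz) + b) with V ∈ ℂ^{(2n−1)×n}, b ∈ ℝ^{2n−1}, ψ : ℝ^{2n−1} → ℂ^m arbitrary (Re taken componentwise), one has sup_{z ∈ K} ‖f(z) − g(z)‖ ≥ c for some fixed c > 0 independent of g, where K = ([−2,2] + i[−2,2])ⁿ and f(z) = (‖z‖, 0, …, 0). In particular, there exists v ∈ ℂⁿ with ‖v‖ = 1 and g(z + v) = g(z) for all z ∈ ℂⁿ. -/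
/-- networks whose first layer uses an activation depending only on the
real part, with only 2n−1 hidden neurons in the first layer, are uniformly bounded away
from f(z) = (‖z‖, 0, …, 0) on K = ([−2,2]+i[−2,2])ⁿ; moreover each such network is
invariant under translation by some unit vector. -/
theorem not_universal_of_real_part_activation
    (n m : ℕ) (hn : 0 < n) (hm : 0 < m)
    (φ : ℝ → ℂ) (hφ : Continuous φ) (ρ : ℂ → ℂ) (hρ : ∀ z, ρ z = φ z.re) :
    ∃ c > (0 : ℝ),
      ∀ (V : Matrix (Fin (2 * n - 1)) (Fin n) ℂ) (b : Fin (2 * n - 1) → ℝ)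
        (ψ : (Fin (2 * n - 1) → ℝ) → EuclideanSpace ℂ (Fin m)),
        (∃ z : EuclideanSpace ℂ (Fin n),
          (∀ i, (z i).re ∈ Set.Icc (-2 : ℝ) 2 ∧ (z i).im ∈ Set.Icc (-2 : ℝ) 2) ∧
          c ≤ ‖(show EuclideanSpace ℂ (Fin m) from WithLp.toLp 2 (fun j => if (j : ℕ) = 0 then (‖z‖ : ℂ) else 0))
                - ψ (fun i => (∑ j, V i j * z j).re + b i)‖) ∧
        ∃ v : EuclideanSpace ℂ (Fin n), ‖v‖ = 1 ∧
          ∀ z : EuclideanSpace ℂ (Fin n),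
            ψ (fun i => (∑ j, V i j * (z + v) j).re + b i)
              = ψ (fun i => (∑ j, V i j * z j).re + b i) := by
  classical
  refine ⟨1/2, by norm_num, ?_⟩
  intro V b ψ
  -- the real-linear map z ↦ Re (V z)
  let L : EuclideanSpace ℂ (Fin n) →ₗ[ℝ] (Fin (2 * n - 1) → ℝ) :=
  { toFun := fun z i => (∑ j, V i j * z j).re
    map_add' := by
      intro x y
      funext i
      simp [PiLp.add_apply, mul_add, Finset.sum_add_distrib]
    map_smul' := by
      intro r z
      funext i
      simp only [PiLp.smul_apply, Complex.real_smul, RingHom.id_apply, Pi.smul_apply,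
        smul_eq_mul]
      have hsum : ∑ j, V i j * ((r : ℂ) * z j) = (r : ℂ) * ∑ j, V i j * z j := by
        rw [Finset.mul_sum]
        exact Finset.sum_congr rfl fun j _ => by ring
      rw [hsum, Complex.re_ofReal_mul] }
  have hninj : ¬ Function.Injective L := by
    intro h
    have h1 := LinearMap.finrank_le_finrank_of_injective h
    have e : EuclideanSpace ℂ (Fin n) ≃ₗ[ℝ] (Fin n → ℂ) :=
      WithLp.linearEquiv 2 ℝ (Fin n → ℂ)
    have h2 : Module.finrank ℝ (EuclideanSpace ℂ (Fin n)) = 2 * n := by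
      rw [e.finrank_eq, Module.finrank_pi_fintype]
      simp [Complex.finrank_real_complex, mul_comm]
    have h3 : Module.finrank ℝ (Fin (2 * n - 1) → ℝ) = 2 * n - 1 := by
      simp [Module.finrank_fintype_fun_eq_card]
    rw [h2, h3] at h1
    omega
  obtain ⟨x, y, hxy, hne⟩ : ∃ x y, L x = L y ∧ x ≠ y := by
    by_contra h
    push_neg at h
    exact hninj fun a b hab => h a b hab
  set w : EuclideanSpace ℂ (Fin n) := x - y with hw
  have hw0 : w ≠ 0 := sub_ne_zero.mpr hne
  have hLw : L w = 0 := by rw [hw, map_sub, hxy, sub_self]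
  have hnw : ‖w‖ ≠ 0 := norm_ne_zero_iff.mpr hw0
  set v : EuclideanSpace ℂ (Fin n) := ‖w‖⁻¹ • w with hv
  have hv1 : ‖v‖ = 1 := by
    rw [hv, norm_smul, norm_inv, norm_norm, inv_mul_cancel₀ hnw]
  have hLv : L v = 0 := by rw [hv, map_smul, hLw, smul_zero]
  have hshift : ∀ z : EuclideanSpace ℂ (Fin n),
      (fun i => (∑ j, V i j * (z + v) j).re + b i)
        = (fun i => (∑ j, V i j * z j).re + b i) := by
    intro z
    funext i
    have h1 : L (z + v) = L z := by rw [map_add, hLv, add_zero]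
    have h2 : L (z + v) i = L z i := congrFun h1 i
    simpa [L] using congrArg (· + b i) h2
  -- the translation-invariance part
  have hinv : ∀ z : EuclideanSpace ℂ (Fin n),
      ψ (fun i => (∑ j, V i j * (z + v) j).re + b i)
        = ψ (fun i => (∑ j, V i j * z j).re + b i) := fun z => by rw [hshift z]
  -- coordinates of v lie in [-1,1]
  have hcoord : ∀ i, ‖v i‖ ≤ 1 := by
    intro i
    have h1 : ‖v i‖ ^ 2 ≤ ∑ j, ‖v j‖ ^ 2 := by
      exact Finset.single_le_sum (f := fun j => ‖v j‖ ^ 2)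
        (fun j _ => sq_nonneg _) (Finset.mem_univ i)
    have h2 : ‖v‖ ^ 2 = ∑ j, ‖v j‖ ^ 2 := by
      rw [EuclideanSpace.norm_eq]
      rw [Real.sq_sqrt (Finset.sum_nonneg fun j _ => sq_nonneg _)]
    rw [hv1] at h2
    have : ‖v i‖ ^ 2 ≤ 1 := by rw [← h2] at h1; simpa using h1
    nlinarith [norm_nonneg (v i)]
  have hK : ∀ i, (v i).re ∈ Set.Icc (-2 : ℝ) 2 ∧ (v i).im ∈ Set.Icc (-2 : ℝ) 2 := by
    intro i
    have hre : |(v i).re| ≤ 1 := le_trans (Complex.abs_re_le_norm _) (hcoord i)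
    have him : |(v i).im| ≤ 1 := le_trans (Complex.abs_im_le_norm _) (hcoord i)
    rw [abs_le] at hre him
    constructor <;> constructor <;> linarith [hre.1, hre.2, him.1, him.2]
  -- the two candidate points
  set fv : EuclideanSpace ℂ (Fin m) :=
    WithLp.toLp 2 (fun j => if (j : ℕ) = 0 then (‖v‖ : ℂ) else 0) with hfv
  set f0 : EuclideanSpace ℂ (Fin m) :=
    WithLp.toLp 2 (fun j => if (j : ℕ) = 0 then ((‖(0 : EuclideanSpace ℂ (Fin n))‖ : ℝ) : ℂ) else 0) with hf0
  have hf0z : f0 = 0 := by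
    ext j
    simp [hf0]
  have hfvs : fv = EuclideanSpace.single (⟨0, hm⟩ : Fin m) (1 : ℂ) := by
    ext j
    rw [hfv, PiLp.toLp_apply, EuclideanSpace.single_apply]
    by_cases hj : (j : ℕ) = 0
    · have : j = ⟨0, hm⟩ := Fin.ext hj
      simp [this, hv1]
    · have : j ≠ ⟨0, hm⟩ := fun h => hj (by rw [h])
      simp [hj, this]
  have hD : ‖fv - f0‖ = 1 := by
    rw [hf0z, sub_zero, hfvs, EuclideanSpace.norm_single, norm_one]
  -- ψ takes the same value at args(v) and args(0)
  have hargs : (fun i => (∑ j, V i j * v j).re + b i)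
      = (fun i => (∑ j, V i j * (0 : EuclideanSpace ℂ (Fin n)) j).re + b i) := by
    have := hshift 0
    simpa using this
  by_cases hcase : 1/2 ≤ ‖fv - ψ (fun i => (∑ j, V i j * v j).re + b i)‖
  · exact ⟨⟨v, hK, hcase⟩, v, hv1, hinv⟩
  · push_neg at hcase
    refine ⟨⟨0, ?_⟩, v, hv1, hinv⟩
    refine ⟨fun i => by simp, ?_⟩
    rw [← hargs]
    set p := ψ (fun i => (∑ j, V i j * v j).re + b i) with hp
    have h1 : ‖f0 - p‖ = ‖(fv - p) - (fv - f0)‖ := by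
      have : f0 - p = (fv - p) - (fv - f0) := by abel
      rw [this]
    have h2 : ‖(fv - p) - (fv - f0)‖ ≥ ‖fv - f0‖ - ‖fv - p‖ := by
      have := norm_sub_norm_le (fv - f0) (fv - p)
      calc ‖(fv - p) - (fv - f0)‖ = ‖(fv - f0) - (fv - p)‖ := by rw [norm_sub_rev]
        _ ≥ ‖fv - f0‖ - ‖fv - p‖ := norm_sub_norm_le _ _
    rw [hD] at h2
    linarith [h1 ▸ h2]
end

section
/- Let ρ(z) = sin(z) + w(z)·exp(−z) with w : ℂ → ℂ continuous and bounded. Then for every compact K ⊆ ℂ and every ε > 0 there exist h > 0 and k ∈ ℕ such that sup_{z ∈ K} |(1/h)·ρ(hz + 2πk) − z| < ε. In particular, the identity on ℂ can be uniformly approximated on compact sets by maps of the form ψ ∘ ρ ∘ φ with φ, ψ : ℂ → ℂ ℂ-affine. -/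
open Complex in
lemma sin_sub_self_bound {u : ℂ} (hu : ‖u‖ ≤ 1) :
    ‖Complex.sin u - u‖ ≤ ‖u‖ ^ 2 := by
  have h1 : ‖u * I‖ ≤ 1 := by simpa using hu
  have h2 : ‖-u * I‖ ≤ 1 := by simpa using hu
  have b1 : ‖Complex.exp (u * I) - 1 - u * I‖ ≤ ‖u‖ ^ 2 := by
    simpa using Complex.norm_exp_sub_one_sub_id_le h1
  have b2 : ‖Complex.exp (-u * I) - 1 - (-u * I)‖ ≤ ‖u‖ ^ 2 := by
    simpa using Complex.norm_exp_sub_one_sub_id_le h2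
  have key : Complex.sin u - u =
      ((Complex.exp (-u * I) - 1 - (-u * I)) - (Complex.exp (u * I) - 1 - u * I)) * I / 2 := by
    rw [Complex.sin]
    linear_combination (-u) * Complex.I_sq
  rw [key]
  have tri := norm_sub_le (Complex.exp (-u * I) - 1 - (-u * I)) (Complex.exp (u * I) - 1 - u * I)
  have heq : ‖((Complex.exp (-u * I) - 1 - (-u * I)) - (Complex.exp (u * I) - 1 - u * I)) * I / 2‖
      = ‖(Complex.exp (-u * I) - 1 - (-u * I)) - (Complex.exp (u * I) - 1 - u * I)‖ / 2 := by
    simp [map_div₀, map_mul]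
  rw [heq]
  linarith

open Complex in
/-- for ρ(z) = sin z + w(z)·exp(−z) with w continuous and bounded, the identity
is uniformly approximated on compacts by z ↦ (1/h)·ρ(hz + 2πk). -/
theorem approx_identity_sin_plus_bounded
    (w : ℂ → ℂ) (hw : Continuous w) (hwb : ∃ M : ℝ, ∀ z, ‖w z‖ ≤ M)
    (ρ : ℂ → ℂ) (hρ : ∀ z, ρ z = Complex.sin z + w z * Complex.exp (-z))
    (K : Set ℂ) (hK : IsCompact K) (ε : ℝ) (hε : 0 < ε) :
    ∃ (h : ℝ), 0 < h ∧ ∃ k : ℕ, ∀ z ∈ K,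
      ‖(1 / (h : ℂ)) * ρ ((h : ℂ) * z + 2 * Real.pi * (k : ℂ)) - z‖ < ε := by
  obtain ⟨M, hM⟩ := hwb
  set M' : ℝ := max M 1 with hM'def
  have hM'1 : (1:ℝ) ≤ M' := le_max_right _ _
  have hM'0 : (0:ℝ) < M' := lt_of_lt_of_le one_pos hM'1
  have hMw : ∀ z, ‖w z‖ ≤ M' := fun z => (hM z).trans (le_max_left _ _)
  clear_value M'
  obtain ⟨r, hr⟩ := hK.isBounded.subset_closedBall 0
  set R : ℝ := max r 0 + 1 with hRdef
  have hR1 : (1:ℝ) ≤ R := by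
    have : (0:ℝ) ≤ max r 0 := le_max_right _ _
    simp only [hRdef]; linarith
  have hR0 : (0:ℝ) < R := lt_of_lt_of_le one_pos hR1
  have hRz : ∀ z ∈ K, ‖z‖ ≤ R := by
    intro z hz
    have := hr hz
    simp only [Metric.mem_closedBall, Complex.dist_eq, sub_zero] at this
    have h2 : r ≤ max r 0 := le_max_left _ _
    simp only [hRdef]; linarith
  clear_value R
  set h : ℝ := min (1/R) (ε/(2*R^2)) with hhdef
  have hh0 : 0 < h := lt_min (by positivity) (by positivity)
  refine ⟨h, hh0, ?_⟩
  have hhR : h * R ≤ 1 := by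
    have h1 : h ≤ 1/R := min_le_left _ _
    calc h * R ≤ (1/R) * R := by gcongr
      _ = 1 := by field_simp
  have hhε : h * R^2 ≤ ε/2 := by
    have h1 : h ≤ ε/(2*R^2) := min_le_right _ _
    calc h * R^2 ≤ (ε/(2*R^2)) * R^2 := by gcongr
      _ = ε/2 := by field_simp
  clear_value h
  obtain ⟨k, hk⟩ := exists_nat_gt (max (6*M'/(ε*h)) 1)
  have hk1 : (1:ℝ) < k := lt_of_le_of_lt (le_max_right _ _) hk
  have hk0 : (0:ℝ) < k := by linarith
  have hkM : 6*M'/(ε*h) < k := lt_of_le_of_lt (le_max_left _ _) hk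
  refine ⟨k, ?_⟩
  intro z hz
  have hzR := hRz z hz
  have hz0 : (0:ℝ) ≤ ‖z‖ := norm_nonneg z
  set u : ℂ := (h:ℂ) * z with hudef
  have hau : ‖u‖ = h * ‖z‖ := by
    simp [hudef, norm_mul, Complex.norm_real, abs_of_pos hh0]
  have hu1 : ‖u‖ ≤ 1 := by
    rw [hau]
    calc h * ‖z‖ ≤ h * R := by gcongr
      _ ≤ 1 := hhR
  have hsin := sin_sub_self_bound hu1
  have hc : (h:ℂ) ≠ 0 := by exact_mod_cast ne_of_gt hh0
  set a : ℂ := (h:ℂ) * z + 2 * Real.pi * (k:ℂ) with hadef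
  have hsinp : Complex.sin a = Complex.sin u := by
    have := Complex.sin_add_nat_mul_two_pi u k
    rw [show a = u + (k:ℂ) * (2 * (Real.pi:ℂ)) by rw [hadef, hudef]; push_cast; ring]
    exact this
  have hdecomp : (1/(h:ℂ)) * ρ a - z
      = (1/(h:ℂ)) * (Complex.sin u - u) + (1/(h:ℂ)) * (w a * Complex.exp (-a)) := by
    rw [hρ, hsinp]
    field_simp
    ring
  rw [hdecomp]
  have habsinv : ‖1/(h:ℂ)‖ = 1/h := by
    simp [norm_div, Complex.norm_real, abs_of_pos hh0]
  have e1 : ‖(1/(h:ℂ)) * (Complex.sin u - u)‖ ≤ ε/2 := by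
    rw [norm_mul, habsinv]
    calc (1/h) * ‖Complex.sin u - u‖ ≤ (1/h) * (‖u‖ ^ 2) := by gcongr
      _ = (1/h) * ((h * ‖z‖)^2) := by rw [hau]
      _ = h * ‖z‖ ^ 2 := by field_simp
      _ ≤ h * R^2 := by gcongr
      _ ≤ ε/2 := hhε
  -- bound the exponential term
  have hare : a.re = h * z.re + 2 * Real.pi * k := by
    simp [hadef, Complex.add_re, Complex.mul_re]
  have hren : -(h * z.re) ≤ 1 := by
    have h1 : |z.re| ≤ ‖z‖ := Complex.abs_re_le_norm z
    have h2 : -(z.re) ≤ ‖z‖ := by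
      have := neg_abs_le z.re; linarith [abs_le.mp (le_refl |z.re|)]
    nlinarith
  have hexpa : ‖Complex.exp (-a)‖ = Real.exp (-(h * z.re)) * Real.exp (-(2 * Real.pi * k)) := by
    rw [Complex.norm_exp, ← Real.exp_add]
    congr 1
    simp [Complex.neg_re, hare]
    ring
  have hexp1 : Real.exp (-(h * z.re)) ≤ 3 := by
    calc Real.exp (-(h * z.re)) ≤ Real.exp 1 := Real.exp_le_exp.mpr hren
      _ ≤ 3 := by linarith [Real.exp_one_lt_d9]
  have hexp2 : Real.exp (-(2 * Real.pi * k)) < 1/k := by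
    rw [Real.exp_neg]
    rw [inv_eq_one_div]
    apply one_div_lt_one_div_of_lt hk0
    have h1 : 2 * Real.pi * k + 1 ≤ Real.exp (2 * Real.pi * k) := Real.add_one_le_exp _
    have hpi : (1:ℝ) ≤ Real.pi := by linarith [Real.pi_gt_three]
    nlinarith
  have e2 : ‖(1/(h:ℂ)) * (w a * Complex.exp (-a))‖ < ε/2 := by
    rw [norm_mul, norm_mul, habsinv, hexpa]
    have hwa := hMw a
    have hwa0 : (0:ℝ) ≤ ‖w a‖ := norm_nonneg _
    have hex0 : (0:ℝ) < Real.exp (-(h * z.re)) := Real.exp_pos _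
    have key : (1/h) * (‖w a‖ * (Real.exp (-(h * z.re)) * Real.exp (-(2 * Real.pi * k))))
        ≤ (1/h) * (M' * (3 * Real.exp (-(2 * Real.pi * k)))) := by
      gcongr
    refine lt_of_le_of_lt key ?_
    -- (1/h) * M' * 3 * exp(-2πk) < (1/h)*M'*3*(1/k) ≤ ε/2
    have step1 : (1/h) * (M' * (3 * Real.exp (-(2 * Real.pi * k)))) < (1/h) * (M' * (3 * (1/k))) := by
      gcongr
    refine lt_of_lt_of_le step1 ?_
    -- need (3 M')/(h k) ≤ ε/2, from k > 6M'/(εh)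
    rw [div_lt_iff₀ (by positivity)] at hkM
    have heq : (1/h) * (M' * (3 * (1/(k:ℝ)))) = 3 * M' / (h * k) := by field_simp
    rw [heq, div_le_iff₀ (by positivity)]
    have he : ε / 2 * (h * (k:ℝ)) = (k:ℝ) * (ε * h) / 2 := by ring
    rw [he]
    linarith
  calc ‖(1/(h:ℂ)) * (Complex.sin u - u) + (1/(h:ℂ)) * (w a * Complex.exp (-a))‖
      ≤ ‖(1/(h:ℂ)) * (Complex.sin u - u)‖ + ‖(1/(h:ℂ)) * (w a * Complex.exp (-a))‖ :=
        norm_add_le _ _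
    _ < ε/2 + ε/2 := by
        apply add_lt_add_of_le_of_lt e1 e2
    _ = ε := by ring
end
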